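/- arXiv:1903.05548 — 12 statements merged into one kernel-verified Lean document; each statement's English description precedes it below -/
import Mathlib

section
/- For a partition λ = (λ₁ ≥ λ₂ ≥ ... ≥ λₙ ≥ 0), the Gelfand-Tsetlin polytope GT(λ) decomposes as the Minkowski sum GT(λ) = Σ_{k=1}^{n} (λₖ - λ_{k+1})·GT(1^k 0^{n-k}), where λ_{n+1} = 0 and c·P denotes the dilation of the polytope P by the scalar c. -/
open Pointwise Finset

lemma tele (f : ℕ → ℝ) : ∀ (b a : ℕ), a ≤ b + 1 →
    ∑ k ∈ Finset.Icc a b, (f k - f (k+1)) = f a - f (b+1) := by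
  intro b
  induction b with
  | zero => intro a ha; interval_cases a <;> simp
  | succ b ih =>
    intro a ha
    rcases Nat.lt_or_ge a (b+2) with h | h
    · have h' : a ≤ b + 1 := by omega
      rw [Finset.sum_Icc_succ_top h', ih a h']
      ring
    · have ha2 : a = b + 2 := by omega
      subst ha2
      rw [Finset.Icc_eq_empty (by omega)]
      simp

lemma min_sub_min_mono {u v a b : ℝ} (huv : v ≤ u) (hba : b ≤ a) :
    min b u - min b v ≤ min a u - min a v := by
  simp only [min_def]
  split_ifs <;> linarith

lemma sum_mem_setSum {ι M : Type*} [AddCommMonoid M] (s : Finset ι)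
    (f : ι → Set M) (g : ι → M) (h : ∀ i ∈ s, g i ∈ f i) :
    ∑ i ∈ s, g i ∈ ∑ i ∈ s, f i := by
  classical
  induction s using Finset.induction with
  | empty => simp
  | @insert a s hns ih =>
    rw [Finset.sum_insert hns, Finset.sum_insert hns]
    exact Set.add_mem_add (h _ (Finset.mem_insert_self _ _))
      (ih fun i hi => h i (Finset.mem_insert_of_mem hi))

lemma mem_setSum {ι M : Type*} [AddCommMonoid M] (s : Finset ι)
    (f : ι → Set M) (x : M) (h : x ∈ ∑ i ∈ s, f i) :
    ∃ g : ι → M, (∀ i ∈ s, g i ∈ f i) ∧ x = ∑ i ∈ s, g i := by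
  classical
  induction s using Finset.induction generalizing x with
  | empty => exact ⟨fun _ => 0, by simp, by simpa using h⟩
  | @insert a s hns ih =>
    rw [Finset.sum_insert hns] at h
    rcases Set.mem_add.mp h with ⟨u, hu, v, hv, rfl⟩
    rcases ih v hv with ⟨g, hg, rfl⟩
    refine ⟨Function.update g a u, ?_, ?_⟩
    · intro i hi
      rcases Finset.mem_insert.mp hi with rfl | hi2
      · simpa using hu
      · rw [Function.update_of_ne (by rintro rfl; exact hns hi2)]
        exact hg i hi2
    · rw [Finset.sum_insert hns, Function.update_self,
        Finset.sum_update_of_notMem hns]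

/-- The Gelfand-Tsetlin polytope of a partition `lam` with `n` parts, realized as a set of
triangular arrays `(x i j)` for `1 ≤ i ≤ j ≤ n` (extended by zero outside the triangle):
the top row is `lam` and consecutive rows interlace. -/
def GTpoly (n : ℕ) (lam : ℕ → ℝ) : Set (ℕ → ℕ → ℝ) :=
  {x | (∀ i j, ¬(1 ≤ i ∧ i ≤ j ∧ j ≤ n) → x i j = 0) ∧
       (∀ i j, 1 ≤ i → i ≤ j → j ≤ n → 0 ≤ x i j) ∧
       (∀ j, 1 ≤ j → j ≤ n → x 1 j = lam j) ∧
       (∀ i j, 2 ≤ i → i ≤ j → j ≤ n → x (i-1) (j-1) ≥ x i j ∧ x i j ≥ x (i-1) j)}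

/-- `GT(λ) = ∑_{k=1}^n (λ_k - λ_{k+1}) · GT(1^k 0^{n-k})`. -/
theorem stmt0 (n : ℕ) (hn : 1 ≤ n) (lam : ℕ → ℤ)
    (hnonneg : ∀ k, 0 ≤ lam k)
    (hdec : ∀ k, 1 ≤ k → k < n → lam (k+1) ≤ lam k)
    (hzero : ∀ k, n < k → lam k = 0) :
    GTpoly n (fun j => (lam j : ℝ)) =
      ∑ k ∈ Finset.Icc 1 n,
        ((lam k : ℝ) - (lam (k+1) : ℝ)) •
          GTpoly n (fun j => if j ≤ k then (1:ℝ) else 0) := by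
  classical
  -- basic facts about lam
  have lam_anti : ∀ a b : ℕ, 1 ≤ a → a ≤ b → lam b ≤ lam a := by
    intro a b ha hab
    induction b with
    | zero => omega
    | succ b ih =>
      rcases Nat.lt_or_ge a (b+1) with h | h
      · have hb : a ≤ b := by omega
        have h2 := ih hb
        rcases Nat.lt_or_ge b n with hbn | hbn
        · exact le_trans (hdec b (by omega) hbn) h2
        · rw [hzero (b+1) (by omega)]; exact hnonneg a
      · have : a = b + 1 := by omega
        subst this; exact le_refl _
  have lam_antiR : ∀ a b : ℕ, 1 ≤ a → a ≤ b → (lam b : ℝ) ≤ (lam a : ℝ) := by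
    intro a b ha hab; exact_mod_cast lam_anti a b ha hab
  have lam_nonnegR : ∀ k, (0:ℝ) ≤ (lam k : ℝ) := fun k => by exact_mod_cast hnonneg k
  have lam_succ_zero : (lam (n+1) : ℝ) = 0 := by
    rw [hzero (n+1) (by omega)]; norm_num
  set c : ℕ → ℝ := fun k => (lam k : ℝ) - (lam (k+1) : ℝ) with hc
  have hc_nonneg : ∀ k ∈ Finset.Icc 1 n, 0 ≤ c k := by
    intro k hk
    rw [Finset.mem_Icc] at hk
    have := lam_antiR k (k+1) (by omega) (by omega)
    simp only [hc]; linarith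
  -- the base pattern
  have base_mem : ∀ k : ℕ,
      (fun i j => if 1 ≤ i ∧ i ≤ j ∧ j ≤ n ∧ j ≤ k then (1:ℝ) else 0) ∈
        GTpoly n (fun j => if j ≤ k then (1:ℝ) else 0) := by
    intro k
    refine ⟨?_, ?_, ?_, ?_⟩
    · intro i j h
      simp only
      rw [if_neg (by tauto)]
    · intro i j _ _ _
      simp only
      split_ifs <;> norm_num
    · intro j h1 h2
      simp only
      split_ifs <;> first | rfl | omega
    · intro i j h2 hij hjn
      constructor <;> simp only <;> split_ifs <;> norm_num <;> omega
  ext x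
  constructor
  · -- forward: GT(λ) ⊆ Minkowski sum
    rintro ⟨hx0, hxpos, hxtop, hxint⟩
    -- upper bound on entries
    have hub : ∀ i j, 1 ≤ i → i ≤ j → j ≤ n → x i j ≤ (lam 1 : ℝ) := by
      intro i
      induction i with
      | zero => intro j h; omega
      | succ i ih =>
        intro j h1 h2 h3
        rcases Nat.eq_zero_or_pos i with rfl | hi
        · rw [hxtop j (by omega) h3]
          exact lam_antiR 1 j (le_refl _) (by omega)
        · have hint := (hxint (i+1) j (by omega) h2 h3).1
          have : x i (j-1) ≤ (lam 1 : ℝ) := ih (j-1) hi (by omega) (by omega)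
          simpa using le_trans hint this
    set z : ℕ → ℕ → ℕ → ℝ :=
      fun k i j => min (x i j) (lam k : ℝ) - min (x i j) (lam (k+1) : ℝ) with hz
    set y : ℕ → ℕ → ℕ → ℝ :=
      fun k => if c k = 0 then
          (fun i j => if 1 ≤ i ∧ i ≤ j ∧ j ≤ n ∧ j ≤ k then (1:ℝ) else 0)
        else (c k)⁻¹ • z k with hy
    have zmem : ∀ k ∈ Finset.Icc 1 n, c k ≠ 0 →
        (c k)⁻¹ • z k ∈ GTpoly n (fun j => if j ≤ k then (1:ℝ) else 0) := by
      intro k hk hck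
      rw [Finset.mem_Icc] at hk
      have hckpos : 0 < c k := lt_of_le_of_ne (hc_nonneg k (by rw [Finset.mem_Icc]; omega)) (Ne.symm hck)
      have hlk : (lam (k+1) : ℝ) ≤ (lam k : ℝ) := lam_antiR k (k+1) (by omega) (by omega)
      refine ⟨?_, ?_, ?_, ?_⟩
      · intro i j h
        have hx := hx0 i j h
        simp only [Pi.smul_apply, smul_eq_mul, hz, hx]
        rw [min_eq_left (lam_nonnegR k), min_eq_left (lam_nonnegR (k+1))]
        ring
      · intro i j h1 h2 h3
        simp only [Pi.smul_apply, smul_eq_mul, hz]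
        have hm : min (x i j) ((lam (k+1) : ℝ)) ≤ min (x i j) ((lam k : ℝ)) :=
          min_le_min (le_refl _) hlk
        exact mul_nonneg (inv_nonneg.mpr hckpos.le) (by linarith)
      · intro j h1 h2
        simp only [Pi.smul_apply, smul_eq_mul, hz]
        rw [hxtop j h1 h2]
        by_cases hjk : j ≤ k
        · have m1 : min ((lam j : ℝ)) ((lam k : ℝ)) = (lam k : ℝ) :=
            min_eq_right (lam_antiR j k h1 hjk)
          have m2 : min ((lam j : ℝ)) ((lam (k+1) : ℝ)) = (lam (k+1) : ℝ) :=
            min_eq_right (lam_antiR j (k+1) h1 (by omega))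
          rw [if_pos hjk, m1, m2]
          field_simp [hc]
          rfl
        · have m1 : min ((lam j : ℝ)) ((lam k : ℝ)) = (lam j : ℝ) :=
            min_eq_left (lam_antiR k j (by omega) (by omega))
          have m2 : min ((lam j : ℝ)) ((lam (k+1) : ℝ)) = (lam j : ℝ) :=
            min_eq_left (lam_antiR (k+1) j (by omega) (by omega))
          rw [if_neg hjk, m1, m2]
          ring
      · intro i j h2 hij hjn
        have hint := hxint i j h2 hij hjn
        have inv_nonneg : (0:ℝ) ≤ (c k)⁻¹ := by positivity
        constructor
        · simp only [Pi.smul_apply, smul_eq_mul, hz]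
          exact mul_le_mul_of_nonneg_left (min_sub_min_mono hlk hint.1) inv_nonneg
        · simp only [Pi.smul_apply, smul_eq_mul, hz]
          exact mul_le_mul_of_nonneg_left (min_sub_min_mono hlk hint.2) inv_nonneg
    have ymem : ∀ k ∈ Finset.Icc 1 n,
        y k ∈ GTpoly n (fun j => if j ≤ k then (1:ℝ) else 0) := by
      intro k hk
      simp only [hy]
      split_ifs with hck
      · exact base_mem k
      · exact zmem k hk hck
    have hcy : ∀ k ∈ Finset.Icc 1 n, c k • y k = z k := by
      intro k hk
      simp only [hy]
      split_ifs with hck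
      · have hlkk : (lam k : ℝ) = (lam (k+1) : ℝ) := by
          have : (lam k : ℝ) - (lam (k+1) : ℝ) = 0 := hck
          linarith
        funext i j
        simp only [hck, Pi.smul_apply, smul_eq_mul, hz, zero_smul, hlkk]
        ring
      · rw [smul_smul, mul_inv_cancel₀ hck, one_smul]
    have hxsum : x = ∑ k ∈ Finset.Icc 1 n, c k • y k := by
      funext i j
      rw [Finset.sum_apply, Finset.sum_apply]
      have : ∀ k ∈ Finset.Icc 1 n, (c k • y k) i j = z k i j := by
        intro k hk; rw [hcy k hk]
      rw [Finset.sum_congr rfl this]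
      have ht := tele (fun k => min (x i j) ((lam k : ℝ))) n 1 (by omega)
      simp only [hz]
      rw [ht]
      by_cases h : 1 ≤ i ∧ i ≤ j ∧ j ≤ n
      · have hpos := hxpos i j h.1 h.2.1 h.2.2
        have hle := hub i j h.1 h.2.1 h.2.2
        simp only [lam_succ_zero, min_eq_left hle, min_eq_right hpos]
        ring
      · rw [hx0 i j h]
        simp only [lam_succ_zero, min_self]
        rw [min_eq_left (lam_nonnegR 1)]
        ring
    rw [hxsum]
    exact sum_mem_setSum _ _ _ (fun k hk => Set.smul_mem_smul_set (ymem k hk))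
  · -- reverse: Minkowski sum ⊆ GT(λ)
    intro hx
    obtain ⟨g, hg, rfl⟩ := mem_setSum _ _ _ hx
    choose y hymem hyg using fun k (hk : k ∈ Finset.Icc 1 n) =>
      Set.mem_smul_set.mp (hg k hk)
    have hg0 : ∀ k ∈ Finset.Icc 1 n, ∀ i j, ¬(1 ≤ i ∧ i ≤ j ∧ j ≤ n) → g k i j = 0 := by
      intro k hk i j h
      rw [← hyg k hk]
      obtain ⟨h0, _, _, _⟩ := hymem k hk
      simp [Pi.smul_apply, h0 i j h]
    have hgpos : ∀ k ∈ Finset.Icc 1 n, ∀ i j, 1 ≤ i → i ≤ j → j ≤ n → 0 ≤ g k i j := by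
      intro k hk i j h1 h2 h3
      rw [← hyg k hk]
      obtain ⟨_, hp, _, _⟩ := hymem k hk
      simp only [Pi.smul_apply, smul_eq_mul]
      exact mul_nonneg (hc_nonneg k hk) (hp i j h1 h2 h3)
    have hgtop : ∀ k ∈ Finset.Icc 1 n, ∀ j, 1 ≤ j → j ≤ n →
        g k 1 j = c k * (if j ≤ k then 1 else 0) := by
      intro k hk j h1 h2
      rw [← hyg k hk]
      obtain ⟨_, _, ht, _⟩ := hymem k hk
      simp only [Pi.smul_apply, smul_eq_mul]
      rw [ht j h1 h2]
    have hgint : ∀ k ∈ Finset.Icc 1 n, ∀ i j, 2 ≤ i → i ≤ j → j ≤ n →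
        g k (i-1) (j-1) ≥ g k i j ∧ g k i j ≥ g k (i-1) j := by
      intro k hk i j h2 hij hjn
      rw [← hyg k hk]
      obtain ⟨_, _, _, hi⟩ := hymem k hk
      obtain ⟨ha, hb⟩ := hi i j h2 hij hjn
      simp only [Pi.smul_apply, smul_eq_mul]
      constructor
      · exact mul_le_mul_of_nonneg_left ha (hc_nonneg k hk)
      · exact mul_le_mul_of_nonneg_left hb (hc_nonneg k hk)
    refine ⟨?_, ?_, ?_, ?_⟩
    · intro i j h
      rw [Finset.sum_apply, Finset.sum_apply]
      exact Finset.sum_eq_zero (fun k hk => hg0 k hk i j h)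
    · intro i j h1 h2 h3
      rw [Finset.sum_apply, Finset.sum_apply]
      exact Finset.sum_nonneg (fun k hk => hgpos k hk i j h1 h2 h3)
    · intro j h1 h2
      rw [Finset.sum_apply, Finset.sum_apply]
      have step1 : ∑ k ∈ Finset.Icc 1 n, g k 1 j =
          ∑ k ∈ Finset.Icc 1 n, (if j ≤ k then c k else 0) := by
        refine Finset.sum_congr rfl (fun k hk => ?_)
        rw [hgtop k hk j h1 h2]
        split_ifs <;> ring
      have step2 : ∑ k ∈ Finset.Icc 1 n, (if j ≤ k then c k else 0) =
          ∑ k ∈ Finset.Icc j n, (if j ≤ k then c k else 0) := by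
        refine (Finset.sum_subset (Finset.Icc_subset_Icc h1 le_rfl) ?_).symm
        intro k hk hk2
        rw [Finset.mem_Icc] at hk hk2
        rw [if_neg (by omega)]
      have step3 : ∑ k ∈ Finset.Icc j n, (if j ≤ k then c k else 0) =
          ∑ k ∈ Finset.Icc j n, ((lam k : ℝ) - (lam (k+1) : ℝ)) := by
        refine Finset.sum_congr rfl (fun k hk => ?_)
        rw [Finset.mem_Icc] at hk
        rw [if_pos hk.1]
      have step4 := tele (fun k => (lam k : ℝ)) n j (by omega)
      rw [step1, step2, step3, step4]
      simp [lam_succ_zero]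
    · intro i j h2 hij hjn
      simp only [Finset.sum_apply]
      constructor
      · exact Finset.sum_le_sum (fun k hk => (hgint k hk i j h2 hij hjn).1)
      · exact Finset.sum_le_sum (fun k hk => (hgint k hk i j h2 hij hjn).2)
end

section
/- If λ and μ are partitions with n parts, then the Minkowski sum of Gelfand-Tsetlin polytopes satisfies GT(λ) + GT(μ) = GT(λ + μ), where λ + μ denotes the componentwise sum. -/
open Pointwise

/-- The `lam`-component of a splitting of a GT pattern `x` for `lam + mu`. -/
noncomputable def Ysp (x : ℕ → ℕ → ℝ) (lam : ℕ → ℝ) : ℕ → ℕ → ℝ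
  | 0, _ => 0
  | 1, j => lam j
  | (i+2), j => min (Ysp x lam (i+1) (j-1))
      (max (Ysp x lam (i+1) j) (x (i+2) j - x (i+1) j + Ysp x lam (i+1) j))

lemma inter_of_mono (n : ℕ) (x : ℕ → ℕ → ℝ) (lam : ℕ → ℝ)
    (hxint : ∀ i j, 1 ≤ i → i ≤ j → j + 1 ≤ n →
      x (i+1) (j+1) ≤ x i j ∧ x i (j+1) ≤ x (i+1) (j+1))
    (k : ℕ)
    (Hm : ∀ j, k + 1 ≤ j → j + 1 ≤ n →
      Ysp x lam (k+1) (j+1) ≤ Ysp x lam (k+1) j ∧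
      x (k+1) (j+1) - Ysp x lam (k+1) (j+1) ≤ x (k+1) j - Ysp x lam (k+1) j) :
    ∀ j, k + 2 ≤ j → j ≤ n →
      Ysp x lam (k+2) j ≤ Ysp x lam (k+1) (j-1) ∧
      Ysp x lam (k+1) j ≤ Ysp x lam (k+2) j ∧
      x (k+2) j - Ysp x lam (k+2) j ≤ x (k+1) (j-1) - Ysp x lam (k+1) (j-1) ∧
      x (k+1) j - Ysp x lam (k+1) j ≤ x (k+2) j - Ysp x lam (k+2) j := by
  intro j hj hjn
  obtain ⟨l, rfl⟩ := Nat.exists_eq_add_of_le' (show 1 ≤ j by omega)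
  have hl : k + 1 ≤ l := by omega
  simp only [Nat.add_sub_cancel]
  have hEq : Ysp x lam (k+2) (l+1)
      = min (Ysp x lam (k+1) l)
          (max (Ysp x lam (k+1) (l+1))
            (x (k+2) (l+1) - x (k+1) (l+1) + Ysp x lam (k+1) (l+1))) := by
    simp [Ysp]
  set a := Ysp x lam (k+1) (l+1) with ha
  set b := Ysp x lam (k+1) l with hb
  set t := x (k+2) (l+1) - x (k+1) (l+1) + a with ht
  obtain ⟨hmY, hmZ⟩ := Hm l hl (by omega)
  have hab : a ≤ b := hmY
  obtain ⟨hx1, hx2⟩ := hxint (k+1) l (by omega) hl (by omega)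
  refine ⟨?_, ?_, ?_, ?_⟩
  · rw [hEq]; exact min_le_left _ _
  · rw [hEq]; exact le_min hab (le_max_left _ _)
  · rcases le_total t b with h | h
    · have h1 : t ≤ Ysp x lam (k+2) (l+1) := by
        rw [hEq]; exact le_min h (le_max_right _ _)
      have h2 : x (k+2) (l+1) - t = x (k+1) (l+1) - a := by rw [ht]; ring
      linarith
    · have h1 : b ≤ Ysp x lam (k+2) (l+1) := by
        rw [hEq]; exact le_min le_rfl (le_trans h (le_max_right _ _))
      linarith
  · rcases le_total t a with h | h
    · have h1 : Ysp x lam (k+2) (l+1) ≤ a := by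
        rw [hEq]; exact le_trans (min_le_right _ _) (max_le le_rfl h)
      linarith
    · have h1 : Ysp x lam (k+2) (l+1) ≤ t := by
        rw [hEq]; exact le_trans (min_le_right _ _) (max_le h le_rfl)
      have h2 : x (k+2) (l+1) - t = x (k+1) (l+1) - a := by rw [ht]; ring
      linarith

lemma mono_all (n : ℕ) (x : ℕ → ℕ → ℝ) (lam mu : ℕ → ℝ)
    (hxtop : ∀ j, 1 ≤ j → j ≤ n → x 1 j = lam j + mu j)
    (hldec : ∀ k, 1 ≤ k → k < n → lam (k+1) ≤ lam k)
    (hmdec : ∀ k, 1 ≤ k → k < n → mu (k+1) ≤ mu k)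
    (hxint : ∀ i j, 1 ≤ i → i ≤ j → j + 1 ≤ n →
      x (i+1) (j+1) ≤ x i j ∧ x i (j+1) ≤ x (i+1) (j+1)) :
    ∀ i, 1 ≤ i → ∀ j, i ≤ j → j + 1 ≤ n →
      Ysp x lam i (j+1) ≤ Ysp x lam i j ∧
      x i (j+1) - Ysp x lam i (j+1) ≤ x i j - Ysp x lam i j := by
  intro i hi
  induction i, hi using Nat.le_induction with
  | base =>
    intro j hj hjn
    constructor
    · simpa [Ysp] using hldec j hj (by omega)
    · have e1 := hxtop j hj (by omega)
      have e2 := hxtop (j+1) (by omega) (by omega)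
      have h := hmdec j hj (by omega)
      simp only [Ysp, e1, e2]
      linarith
  | succ i hi IH =>
    intro j hj hjn
    obtain ⟨k, rfl⟩ := Nat.exists_eq_add_of_le' hi
    have hInt := inter_of_mono n x lam hxint k IH
    obtain ⟨h1, h2, h3, h4⟩ := hInt (j+1) (by omega) (by omega)
    obtain ⟨h1', h2', h3', h4'⟩ := hInt j (by omega) (by omega)
    simp only [Nat.add_sub_cancel] at h1 h3
    exact ⟨le_trans h1 h2', le_trans h3 h4'⟩

lemma nonneg_all (n : ℕ) (x : ℕ → ℕ → ℝ) (lam mu : ℕ → ℝ)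
    (hxtop : ∀ j, 1 ≤ j → j ≤ n → x 1 j = lam j + mu j)
    (hldec : ∀ k, 1 ≤ k → k < n → lam (k+1) ≤ lam k)
    (hmdec : ∀ k, 1 ≤ k → k < n → mu (k+1) ≤ mu k)
    (hxint : ∀ i j, 1 ≤ i → i ≤ j → j + 1 ≤ n →
      x (i+1) (j+1) ≤ x i j ∧ x i (j+1) ≤ x (i+1) (j+1)) :
    ∀ i, 1 ≤ i → ∀ j, i ≤ j → j ≤ n →
      lam j ≤ Ysp x lam i j ∧ mu j ≤ x i j - Ysp x lam i j := by
  intro i hi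
  induction i, hi using Nat.le_induction with
  | base =>
    intro j hj hjn
    constructor
    · simp [Ysp]
    · have h := hxtop j hj hjn
      simp only [Ysp]
      linarith
  | succ i hi IH =>
    intro j hj hjn
    obtain ⟨k, rfl⟩ := Nat.exists_eq_add_of_le' hi
    have hInt := inter_of_mono n x lam hxint k
      (mono_all n x lam mu hxtop hldec hmdec hxint (k+1) (by omega))
    obtain ⟨_, h2, _, h4⟩ := hInt j (by omega) hjn
    obtain ⟨ly, lz⟩ := IH j (by omega) hjn
    exact ⟨le_trans ly h2, le_trans lz h4⟩

/-- For partitions `λ`, `μ` with `n` parts, `GT(λ) + GT(μ) = GT(λ + μ)` (Minkowski sum). -/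
theorem stmt1 (n : ℕ) (hn : 1 ≤ n) (lam mu : ℕ → ℤ)
    (hlnn : ∀ k, 0 ≤ lam k) (hmnn : ∀ k, 0 ≤ mu k)
    (hldec : ∀ k, 1 ≤ k → k < n → lam (k+1) ≤ lam k)
    (hmdec : ∀ k, 1 ≤ k → k < n → mu (k+1) ≤ mu k) :
    GTpoly n (fun j => (lam j : ℝ)) + GTpoly n (fun j => (mu j : ℝ)) =
      GTpoly n (fun j => ((lam j + mu j : ℤ) : ℝ)) := by
  set L : ℕ → ℝ := fun j => (lam j : ℝ) with hL
  set M : ℕ → ℝ := fun j => (mu j : ℝ) with hM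
  ext x
  simp only [Set.mem_add]
  constructor
  · rintro ⟨y, hy, z, hz, rfl⟩
    obtain ⟨hy0, hynn, hytop, hyint⟩ := hy
    obtain ⟨hz0, hznn, hztop, hzint⟩ := hz
    refine ⟨?_, ?_, ?_, ?_⟩
    · intro i j h
      simp [Pi.add_apply, hy0 i j h, hz0 i j h]
    · intro i j h1 h2 h3
      simpa [Pi.add_apply] using add_nonneg (hynn i j h1 h2 h3) (hznn i j h1 h2 h3)
    · intro j h1 h2
      have := hytop j h1 h2
      have := hztop j h1 h2
      simp only [Pi.add_apply]
      push_cast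
      rw [hytop j h1 h2, hztop j h1 h2]
    · intro i j h1 h2 h3
      obtain ⟨a1, a2⟩ := hyint i j h1 h2 h3
      obtain ⟨b1, b2⟩ := hzint i j h1 h2 h3
      constructor <;> simp only [Pi.add_apply, ge_iff_le] at * <;> linarith
  · rintro ⟨hx0, hxnn, hxtop, hxint⟩
    have hxint' : ∀ i j, 1 ≤ i → i ≤ j → j + 1 ≤ n →
        x (i+1) (j+1) ≤ x i j ∧ x i (j+1) ≤ x (i+1) (j+1) := by
      intro i j h1 h2 h3
      have h := hxint (i+1) (j+1) (by omega) (by omega) (by omega)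
      simp only [Nat.add_sub_cancel] at h
      exact ⟨h.1, h.2⟩
    have hxtop' : ∀ j, 1 ≤ j → j ≤ n → x 1 j = L j + M j := by
      intro j h1 h2
      rw [hxtop j h1 h2]
      push_cast
      ring
    have hldec' : ∀ k, 1 ≤ k → k < n → L (k+1) ≤ L k := by
      intro k h1 h2; simp only [hL]; exact_mod_cast hldec k h1 h2
    have hmdec' : ∀ k, 1 ≤ k → k < n → M (k+1) ≤ M k := by
      intro k h1 h2; simp only [hM]; exact_mod_cast hmdec k h1 h2
    have hmono := mono_all n x L M hxtop' hldec' hmdec' hxint'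
    have hnn := nonneg_all n x L M hxtop' hldec' hmdec' hxint'
    have hinter : ∀ k j, k + 2 ≤ j → j ≤ n →
        Ysp x L (k+2) j ≤ Ysp x L (k+1) (j-1) ∧
        Ysp x L (k+1) j ≤ Ysp x L (k+2) j ∧
        x (k+2) j - Ysp x L (k+2) j ≤ x (k+1) (j-1) - Ysp x L (k+1) (j-1) ∧
        x (k+1) j - Ysp x L (k+1) j ≤ x (k+2) j - Ysp x L (k+2) j :=
      fun k => inter_of_mono n x L hxint' k (hmono (k+1) (by omega))
    set Yf : ℕ → ℕ → ℝ :=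
      fun i j => if 1 ≤ i ∧ i ≤ j ∧ j ≤ n then Ysp x L i j else 0 with hYf
    refine ⟨Yf, ?_, x - Yf, ?_, by abel⟩
    · refine ⟨?_, ?_, ?_, ?_⟩
      · intro i j h
        simp only [hYf, if_neg h]
      · intro i j h1 h2 h3
        simp only [hYf, if_pos (And.intro h1 (And.intro h2 h3))]
        have h4 := (hnn i h1 j h2 h3).1
        have h5 : (0:ℝ) ≤ L j := by simp only [hL]; exact_mod_cast hlnn j
        linarith
      · intro j h1 h2
        simp only [hYf, if_pos (And.intro le_rfl (And.intro h1 h2))]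
        simp [Ysp]
      · intro i j h1 h2 h3
        obtain ⟨k, rfl⟩ := Nat.exists_eq_add_of_le' h1
        obtain ⟨l, rfl⟩ := Nat.exists_eq_add_of_le' (show 1 ≤ j by omega)
        have e1 : k + 2 - 1 = k + 1 := rfl
        have e2 : l + 1 - 1 = l := rfl
        rw [e1, e2]
        have hc1 : 1 ≤ k+2 ∧ k+2 ≤ l+1 ∧ l+1 ≤ n := ⟨by omega, h2, h3⟩
        have hc2 : 1 ≤ k+1 ∧ k+1 ≤ l ∧ l ≤ n := ⟨by omega, by omega, by omega⟩
        have hc3 : 1 ≤ k+1 ∧ k+1 ≤ l+1 ∧ l+1 ≤ n := ⟨by omega, by omega, h3⟩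
        simp only [hYf, if_pos hc1, if_pos hc2, if_pos hc3]
        have h := hinter k (l+1) h2 h3
        simp only [Nat.add_sub_cancel] at h
        exact ⟨h.1, h.2.1⟩
    · refine ⟨?_, ?_, ?_, ?_⟩
      · intro i j h
        simp only [Pi.sub_apply, hYf, if_neg h, hx0 i j h, sub_zero]
      · intro i j h1 h2 h3
        simp only [Pi.sub_apply, hYf, if_pos (And.intro h1 (And.intro h2 h3))]
        have h4 := (hnn i h1 j h2 h3).2
        have h5 : (0:ℝ) ≤ M j := by simp only [hM]; exact_mod_cast hmnn j
        linarith
      · intro j h1 h2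
        simp only [Pi.sub_apply, hYf, if_pos (And.intro le_rfl (And.intro h1 h2))]
        have h := hxtop' j h1 h2
        simp only [Ysp]
        rw [h]; ring
      · intro i j h1 h2 h3
        obtain ⟨k, rfl⟩ := Nat.exists_eq_add_of_le' h1
        obtain ⟨l, rfl⟩ := Nat.exists_eq_add_of_le' (show 1 ≤ j by omega)
        have e1 : k + 2 - 1 = k + 1 := rfl
        have e2 : l + 1 - 1 = l := rfl
        rw [e1, e2]
        have hc1 : 1 ≤ k+2 ∧ k+2 ≤ l+1 ∧ l+1 ≤ n := ⟨by omega, h2, h3⟩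
        have hc2 : 1 ≤ k+1 ∧ k+1 ≤ l ∧ l ≤ n := ⟨by omega, by omega, by omega⟩
        have hc3 : 1 ≤ k+1 ∧ k+1 ≤ l+1 ∧ l+1 ≤ n := ⟨by omega, by omega, h3⟩
        simp only [Pi.sub_apply, hYf, if_pos hc1, if_pos hc2, if_pos hc3]
        have h := hinter k (l+1) h2 h3
        simp only [Nat.add_sub_cancel] at h
        exact ⟨h.2.2.1, h.2.2.2⟩
end

section
/- Let G be a directed acyclic connected graph on [n+1] and a₁,...,aₙ,b₁,...,bₙ nonnegative reals. Then F_G(a₁,...,aₙ,-Σaᵢ) + F_G(b₁,...,bₙ,-Σbᵢ) = F_G(a₁+b₁,...,aₙ+bₙ,-Σ(aᵢ+bᵢ)), where + on the left denotes Minkowski sum. -/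
open Pointwise

/-- The flow polytope of a directed graph `E` on vertex set `[n+1]` with netflow `a` at the
vertices `1,…,n` (the netflow at vertex `n+1` is implied). -/
def FlowPoly (n : ℕ) (E : Finset (ℕ × ℕ)) (a : ℕ → ℝ) : Set (ℕ × ℕ → ℝ) :=
  {f | (∀ e, e ∉ E → f e = 0) ∧ (∀ e ∈ E, 0 ≤ f e) ∧
    ∀ v, 1 ≤ v → v ≤ n →
      (∑ e ∈ E.filter (fun e => e.2 = v), f e) + a v =
        ∑ e ∈ E.filter (fun e => e.1 = v), f e}

/-- Proportional routing ratio at each vertex. -/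
noncomputable def rflow (E : Finset (ℕ × ℕ)) (h : ℕ × ℕ → ℝ) (a b : ℕ → ℝ) : ℕ → ℝ
  | u =>
    (a u + ∑ e ∈ (E.filter fun e => e.2 = u ∧ e.1 < u).attach,
        h e.1 * rflow E h a b e.1.1) /
    (a u + b u + ∑ e ∈ E.filter (fun e => e.2 = u ∧ e.1 < u), h e)
termination_by u => u
decreasing_by exact (Finset.mem_filter.mp e.2).2.2

lemma rflow_bounds (E : Finset (ℕ × ℕ)) (h : ℕ × ℕ → ℝ) (a b : ℕ → ℝ)
    (hh : ∀ e ∈ E, 0 ≤ h e) (ha : ∀ i, 0 ≤ a i) (hb : ∀ i, 0 ≤ b i) (u : ℕ) :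
    0 ≤ rflow E h a b u ∧ rflow E h a b u ≤ 1 := by
  induction u using Nat.strong_induction_on with
  | _ u ih =>
    rw [rflow]
    set s := E.filter (fun e => e.2 = u ∧ e.1 < u) with hs
    have hden_sum : ∑ e ∈ s, h e = ∑ e ∈ s.attach, h e.1 := (Finset.sum_attach s h).symm
    have hnum : 0 ≤ a u + ∑ e ∈ s.attach, h e.1 * rflow E h a b e.1.1 := by
      apply add_nonneg (ha u)
      apply Finset.sum_nonneg
      intro e _
      have he : e.1 ∈ s := e.2
      have heE := (Finset.mem_filter.mp he).1
      exact mul_nonneg (hh _ heE) (ih e.1.1 (Finset.mem_filter.mp he).2.2).1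
    have hle : a u + ∑ e ∈ s.attach, h e.1 * rflow E h a b e.1.1 ≤
        a u + b u + ∑ e ∈ s, h e := by
      rw [hden_sum]
      have : ∑ e ∈ s.attach, h e.1 * rflow E h a b e.1.1 ≤ ∑ e ∈ s.attach, h e.1 := by
        apply Finset.sum_le_sum
        intro e _
        have he : e.1 ∈ s := e.2
        have heE := (Finset.mem_filter.mp he).1
        exact mul_le_of_le_one_right (hh _ heE) (ih e.1.1 (Finset.mem_filter.mp he).2.2).2
      linarith [hb u]
    rcases eq_or_lt_of_le (le_trans hnum hle) with hzero | hpos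
    · rw [← hzero, div_zero]; exact ⟨le_refl 0, zero_le_one⟩
    · exact ⟨div_nonneg hnum (le_of_lt hpos), (div_le_one hpos).mpr hle⟩

/-- For a connected DAG `G` on `[n+1]` and nonnegative `a₁,…,aₙ,b₁,…,bₙ`:
`F_G(a) + F_G(b) = F_G(a+b)` (Minkowski sum on the left). -/
theorem stmt3 (n : ℕ) (hn : 1 ≤ n) (E : Finset (ℕ × ℕ))
    (hE : ∀ e ∈ E, 1 ≤ e.1 ∧ e.1 < e.2 ∧ e.2 ≤ n + 1)
    (hconn : ∀ S : Finset ℕ, S ⊆ Finset.Icc 1 (n+1) → S.Nonempty → S ≠ Finset.Icc 1 (n+1) →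
      ∃ e ∈ E, (e.1 ∈ S ∧ e.2 ∉ S) ∨ (e.1 ∉ S ∧ e.2 ∈ S))
    (a b : ℕ → ℝ) (ha : ∀ i, 0 ≤ a i) (hb : ∀ i, 0 ≤ b i) :
    FlowPoly n E a + FlowPoly n E b = FlowPoly n E (fun v => a v + b v) := by
  ext x
  constructor
  · rintro ⟨f, hf, g, hg, rfl⟩
    obtain ⟨hf0, hfpos, hfcons⟩ := hf
    obtain ⟨hg0, hgpos, hgcons⟩ := hg
    refine ⟨fun e he => by simp [hf0 e he, hg0 e he], fun e he => add_nonneg (hfpos e he) (hgpos e he), fun v h1 h2 => ?_⟩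
    have := hfcons v h1 h2
    have := hgcons v h1 h2
    simp only [Pi.add_apply, Finset.sum_add_distrib]
    linarith
  · rintro ⟨hx0, hxpos, hxcons⟩
    set r := rflow E x a b with hr
    have hrb := rflow_bounds E x a b hxpos ha hb
    set f : ℕ × ℕ → ℝ := fun e => x e * r e.1 with hfdef
    -- key conservation for f
    have hfilter : ∀ v, E.filter (fun e => e.2 = v) = E.filter (fun e => e.2 = v ∧ e.1 < v) := by
      intro v
      apply Finset.filter_congr
      intro e he
      constructor
      · intro h2; exact ⟨h2, h2 ▸ (hE e he).2.1⟩
      · exact fun h => h.1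
    have hrval : ∀ v, r v = (a v + ∑ e ∈ E.filter (fun e => e.2 = v), x e * r e.1) /
        (a v + b v + ∑ e ∈ E.filter (fun e => e.2 = v), x e) := by
      intro v
      rw [hr]
      rw [rflow]
      rw [hfilter v]
      congr 1
      congr 1
      rw [← Finset.sum_attach (E.filter (fun e => e.2 = v ∧ e.1 < v)) (fun e => x e * rflow E x a b e.1)]
    have hfcons : ∀ v, 1 ≤ v → v ≤ n →
        (∑ e ∈ E.filter (fun e => e.2 = v), f e) + a v =
          ∑ e ∈ E.filter (fun e => e.1 = v), f e := by
      intro v h1 h2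
      have hx : (∑ e ∈ E.filter (fun e => e.2 = v), x e) + (a v + b v) =
          ∑ e ∈ E.filter (fun e => e.1 = v), x e := hxcons v h1 h2
      have hout : ∑ e ∈ E.filter (fun e => e.1 = v), f e =
          r v * ∑ e ∈ E.filter (fun e => e.1 = v), x e := by
        rw [Finset.mul_sum]
        apply Finset.sum_congr rfl
        intro e he
        have h1e := (Finset.mem_filter.mp he).2
        rw [hfdef]
        simp only []
        rw [h1e]
        ring
      set Sin := ∑ e ∈ E.filter (fun e => e.2 = v), x e with hSin
      set Sinf := ∑ e ∈ E.filter (fun e => e.2 = v), x e * r e.1 with hSinf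
      have houtx : ∑ e ∈ E.filter (fun e => e.1 = v), x e = a v + b v + Sin := by
        linarith
      rw [hout, houtx]
      have hrv := hrval v
      rcases eq_or_ne (a v + b v + Sin) 0 with hz | hnz
      · -- degenerate case: everything is 0
        have hSinpos : 0 ≤ Sin := Finset.sum_nonneg (fun e he => hxpos e (Finset.mem_filter.mp he).1)
        have haz : a v = 0 := by linarith [ha v, hb v]
        have hSz : Sin = 0 := by linarith [ha v, hb v]
        have hterm : ∀ e ∈ E.filter (fun e => e.2 = v), x e = 0 := by
          rw [hSin] at hSz
          intro e he
          exact (Finset.sum_eq_zero_iff_of_nonneg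
            (fun e he => hxpos e (Finset.mem_filter.mp he).1)).mp hSz e he
        have hSinfz : Sinf = 0 := by
          rw [hSinf]
          apply Finset.sum_eq_zero
          intro e he
          rw [hterm e he, zero_mul]
        rw [hSinfz, haz, show (0:ℝ) + b v + Sin = 0 by linarith, mul_zero]
        norm_num
      · rw [← hSin, ← hSinf] at hrv
        rw [hrv, div_mul_cancel₀ _ hnz]
        ring
    refine ⟨f, ⟨fun e he => by simp [hfdef, hx0 e he], fun e he => mul_nonneg (hxpos e he) (hrb e.1).1, hfcons⟩,
      x - f, ⟨?_, ?_, ?_⟩, by funext e; simp only [Pi.add_apply, Pi.sub_apply]; ring⟩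
    · intro e he
      simp [hfdef, hx0 e he]
    · intro e he
      have : x e - f e = x e * (1 - r e.1) := by rw [hfdef]; ring
      simp only [Pi.sub_apply]
      rw [this]
      exact mul_nonneg (hxpos e he) (by linarith [(hrb e.1).2])
    · intro v h1 h2
      have hx : (∑ e ∈ E.filter (fun e => e.2 = v), x e) + (a v + b v) =
          ∑ e ∈ E.filter (fun e => e.1 = v), x e := hxcons v h1 h2
      have hf := hfcons v h1 h2
      simp only [Pi.sub_apply, Finset.sum_sub_distrib]
      linarith
end

section
/- Fix nonnegative integers N₁, N₂ and integers μ₁ ≤ ν₁, ..., μₖ ≤ νₖ with Σᵢ(μᵢ + νᵢ) ≤ N₁ + N₂. Define the Laurent polynomial f(x₁,x₂) = Σ_{c₁=μ₁}^{ν₁} ··· Σ_{cₖ=μₖ}^{νₖ} x₁^{N₁-c₁-···-cₖ} x₂^{c₁+···+cₖ-N₂}. Then applying the Demazure operator π₁ gives π₁f(x₁,x₂) = Σ_{c₁=μ₁}^{ν₁} ··· Σ_{cₖ=μₖ}^{νₖ} Σ_{c_{k+1}=0}^{ν_{k+1}} x₁^{N₁-c₁-···-c_{k+1}} x₂^{c₁+···+c_{k+1}-N₂},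 where ν_{k+1} = N₁+N₂ - Σ_{i=1}^k(μᵢ+νᵢ). -/
lemma geom_telescope (x₁ x₂ : ℝ) (h1 : x₁ ≠ 0) (h2 : x₂ ≠ 0) (A B : ℤ) :
    ∀ M : ℤ, 0 ≤ M →
      (x₁ - x₂) * ∑ c' ∈ Finset.Icc (0 : ℤ) M, x₁ ^ (A - c') * x₂ ^ (B + c') =
        x₁ ^ (A + 1) * x₂ ^ B - x₁ ^ (A - M) * x₂ ^ (B + M + 1) := by
  have step : ∀ a b : ℤ, (x₁ - x₂) * (x₁ ^ a * x₂ ^ b) =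
      x₁ ^ (a + 1) * x₂ ^ b - x₁ ^ a * x₂ ^ (b + 1) := by
    intro a b; rw [zpow_add_one₀ h1, zpow_add_one₀ h2]; ring
  refine Int.le_induction ?_ ?_
  · simp only [Finset.Icc_self, Finset.sum_singleton, sub_zero, add_zero, zero_add]
    rw [step]
  · intro M hM ih
    have hins : Finset.Icc (0 : ℤ) (M + 1) = insert (M + 1) (Finset.Icc 0 M) := by
      ext x; simp only [Finset.mem_Icc, Finset.mem_insert]; omega
    rw [hins, Finset.sum_insert (by simp), mul_add, ih, step]
    have h3 : A - (M + 1) + 1 = A - M := by ring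
    have h4 : B + (M + 1) = B + M + 1 := by ring
    rw [h3, h4]; ring

/-- Key Demazure-operator calculation: with
`f(x₁,x₂) = ∑_{μ ≤ c ≤ ν} x₁^{N₁ - Σcᵢ} x₂^{Σcᵢ - N₂}`, applying
`π₁f = (x₁ f - x₂ s₁f)/(x₁ - x₂)` appends one more summation variable
`0 ≤ c_{k+1} ≤ ν_{k+1} := N₁ + N₂ - Σ(μᵢ + νᵢ)`.  (Stated as an identity of functions
at all points with `x₁, x₂ ≠ 0`, `x₁ ≠ x₂`, which determines the Laurent polynomials.) -/
theorem stmt4 (k N₁ N₂ : ℕ) (μ ν : Fin k → ℤ) (hμν : ∀ i, μ i ≤ ν i)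
    (hsum : (∑ i, (μ i + ν i)) ≤ (N₁ : ℤ) + (N₂ : ℤ))
    (f : ℝ → ℝ → ℝ)
    (hf : ∀ x₁ x₂ : ℝ, f x₁ x₂ = ∑ c ∈ Finset.Icc μ ν,
      x₁ ^ ((N₁ : ℤ) - ∑ i, c i) * x₂ ^ ((∑ i, c i) - (N₂ : ℤ)))
    (x₁ x₂ : ℝ) (h1 : x₁ ≠ 0) (h2 : x₂ ≠ 0) (h12 : x₁ ≠ x₂) :
    (x₁ * f x₁ x₂ - x₂ * f x₂ x₁) / (x₁ - x₂) =
      ∑ c ∈ Finset.Icc μ ν,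
        ∑ c' ∈ Finset.Icc (0 : ℤ) ((N₁ : ℤ) + (N₂ : ℤ) - ∑ i, (μ i + ν i)),
          x₁ ^ ((N₁ : ℤ) - (∑ i, c i) - c') * x₂ ^ ((∑ i, c i) + c' - (N₂ : ℤ)) := by
  set M : ℤ := (N₁ : ℤ) + (N₂ : ℤ) - ∑ i, (μ i + ν i) with hMdef
  have hM : 0 ≤ M := by omega
  rw [div_eq_iff (sub_ne_zero.2 h12), hf, hf]
  rw [Finset.sum_mul]
  have key : ∀ c : Fin k → ℤ,
      (∑ c' ∈ Finset.Icc (0 : ℤ) M,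
          x₁ ^ ((N₁ : ℤ) - (∑ i, c i) - c') * x₂ ^ ((∑ i, c i) + c' - (N₂ : ℤ))) * (x₁ - x₂) =
        x₁ ^ ((N₁ : ℤ) - (∑ i, c i) + 1) * x₂ ^ ((∑ i, c i) - (N₂ : ℤ)) -
          x₁ ^ ((N₁ : ℤ) - (∑ i, c i) - M) * x₂ ^ ((∑ i, c i) - (N₂ : ℤ) + M + 1) := by
    intro c
    rw [mul_comm]
    have := geom_telescope x₁ x₂ h1 h2 ((N₁ : ℤ) - ∑ i, c i) ((∑ i, c i) - (N₂ : ℤ)) M hM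
    rw [← this]
    congr 1
    apply Finset.sum_congr rfl
    intro c' _
    congr 2
    ring
  simp only [key]
  rw [Finset.sum_sub_distrib, Finset.mul_sum, Finset.mul_sum]
  have first : ∀ c : Fin k → ℤ,
      x₁ * (x₁ ^ ((N₁ : ℤ) - ∑ i, c i) * x₂ ^ ((∑ i, c i) - (N₂ : ℤ))) =
        x₁ ^ ((N₁ : ℤ) - (∑ i, c i) + 1) * x₂ ^ ((∑ i, c i) - (N₂ : ℤ)) := by
    intro c; rw [zpow_add_one₀ h1]; ring
  simp only [first]
  congr 1
  -- remaining: ∑ c, x₂ * (x₂^{N₁-S} x₁^{S-N₂}) = ∑ c, x₁^{N₁-S-M} x₂^{S-N₂+M+1}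
  refine Finset.sum_nbij' (fun c => fun i => μ i + ν i - c i) (fun c => fun i => μ i + ν i - c i)
    ?_ ?_ ?_ ?_ ?_
  · intro c hc
    simp only [Finset.mem_Icc] at hc ⊢
    constructor <;> intro i <;> have := hc.1 i <;> have := hc.2 i <;>
      simp only [Pi.le_def] at * <;> omega
  · intro c hc
    simp only [Finset.mem_Icc] at hc ⊢
    constructor <;> intro i <;> have := hc.1 i <;> have := hc.2 i <;>
      simp only [Pi.le_def] at * <;> omega
  · intro c _; funext i; ring
  · intro c _; funext i; ring
  · intro c _
    have hS : (∑ i, (fun i => μ i + ν i - c i) i) = (∑ i, (μ i + ν i)) - ∑ i, c i := by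
      simp [Finset.sum_sub_distrib]
    rw [hS]
    have e1 : (N₁ : ℤ) - ((∑ i, (μ i + ν i)) - ∑ i, c i) - M = (∑ i, c i) - (N₂ : ℤ) := by
      rw [hMdef]; ring
    rw [e1]
    have e3 : (∑ i, (μ i + ν i)) - (∑ i, c i) - (N₂ : ℤ) + M + 1 = (N₁ : ℤ) - (∑ i, c i) + 1 := by
      rw [hMdef]; ring
    rw [e3, zpow_add_one₀ h2]
    ring
end

section
/- With f as in Lemma (Demazure key calculation): f(x₁,x₂) = (x₁/x₂)^{ν_{k+1}} · f(x₂,x₁), where ν_{k+1} = N₁+N₂ - Σ_{i=1}^k(μᵢ+νᵢ). That is, reversing the order of summation shows f satisfies the quasi-symmetry f = (x₁/x₂)^{ν_{k+1}} · s₁f. -/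
/-- Quasi-symmetry of the key sum: with
`f(x₁,x₂) = ∑_{μ ≤ c ≤ ν} x₁^{N₁ - Σcᵢ} x₂^{Σcᵢ - N₂}`, reversing the summation order gives
`f = (x₁/x₂)^{ν_{k+1}} · s₁f` where `ν_{k+1} = N₁ + N₂ - Σ(μᵢ + νᵢ)`. -/
theorem stmt5 (k N₁ N₂ : ℕ) (μ ν : Fin k → ℤ) (hμν : ∀ i, μ i ≤ ν i)
    (hsum : (∑ i, (μ i + ν i)) ≤ (N₁ : ℤ) + (N₂ : ℤ))
    (f : ℝ → ℝ → ℝ)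
    (hf : ∀ x₁ x₂ : ℝ, f x₁ x₂ = ∑ c ∈ Finset.Icc μ ν,
      x₁ ^ ((N₁ : ℤ) - ∑ i, c i) * x₂ ^ ((∑ i, c i) - (N₂ : ℤ)))
    (x₁ x₂ : ℝ) (h1 : x₁ ≠ 0) (h2 : x₂ ≠ 0) :
    f x₁ x₂ = (x₁ / x₂) ^ ((N₁ : ℤ) + (N₂ : ℤ) - ∑ i, (μ i + ν i)) * f x₂ x₁ := by
  set T : ℤ := ∑ i, (μ i + ν i) with hT
  rw [hf, hf, Finset.mul_sum]
  refine Finset.sum_nbij' (fun c => μ + ν - c) (fun c => μ + ν - c) ?_ ?_ ?_ ?_ ?_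
  · intro c hc
    simp only [Finset.mem_Icc, Pi.le_def] at hc ⊢
    constructor
    · intro i; simp only [Pi.add_apply, Pi.sub_apply]; linarith [hc.2 i]
    · intro i; simp only [Pi.add_apply, Pi.sub_apply]; linarith [hc.1 i]
  · intro c hc
    simp only [Finset.mem_Icc, Pi.le_def] at hc ⊢
    constructor
    · intro i; simp only [Pi.add_apply, Pi.sub_apply]; linarith [hc.2 i]
    · intro i; simp only [Pi.add_apply, Pi.sub_apply]; linarith [hc.1 i]
  · intro c hc; funext i; simp
  · intro c hc; funext i; simp
  · intro c hc
    have hS : ∑ i, (μ + ν - c) i = T - ∑ i, c i := by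
      simp [hT, Finset.sum_sub_distrib, Pi.add_apply, Pi.sub_apply]
    rw [hS]
    set S : ℤ := ∑ i, c i
    rw [show (N₁ : ℤ) - S = ((N₁:ℤ) + N₂ - T) + ((T - S) - N₂) by ring,
      show S - (N₂ : ℤ) = ((N₁:ℤ) - (T - S)) - ((N₁:ℤ) + N₂ - T) by ring,
      zpow_add₀ h1, zpow_sub₀ h2, div_zpow]
    ring
end

section
/- For a partition λ with n parts, let f ∈ F_{G_λ} correspond to the Gelfand-Tsetlin pattern P_f ∈ GT(λ) under the integral equivalence. Then wt(P_f) = gwt(f) + λₙ·𝟙ₙ, where 𝟙ₙ is the all-ones vector in ℝⁿ. -/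
/-- Index pairs `(i,j)` of the "a"-edges `(v_{ij}, v_{i+1,j})` of `G_λ`:
`2 ≤ i ≤ j ≤ n`, together with `j = n+1`, `3 ≤ i ≤ n+1`. -/
def aPairs (n : ℕ) : Finset (ℕ × ℕ) :=
  (Finset.Icc 2 (n+1) ×ˢ Finset.Icc 2 (n+1)).filter
    (fun p => (p.1 ≤ p.2 ∧ p.2 ≤ n) ∨ (p.2 = n+1 ∧ 3 ≤ p.1))

/-- Index pairs `(i,j)` of the "b"-edges `(v_{ij}, v_{i+1,j+1})` of `G_λ`:
`2 ≤ i ≤ j ≤ n`, together with `j = i-1`, `3 ≤ i ≤ n+1`. -/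
def bPairs (n : ℕ) : Finset (ℕ × ℕ) :=
  (Finset.Icc 2 (n+1) ×ˢ Finset.Icc 1 n).filter
    (fun p => (p.1 ≤ p.2 ∧ p.2 ≤ n) ∨ (p.2 + 1 = p.1 ∧ 3 ≤ p.1))

/-- Edge set of the flow network `G_λ` (vertices are labelled by pairs `(i,j)`). -/
def Gedges (n : ℕ) : Finset ((ℕ × ℕ) × (ℕ × ℕ)) :=
  (aPairs n).image (fun p => ((p.1, p.2), (p.1 + 1, p.2))) ∪
  (bPairs n).image (fun p => ((p.1, p.2), (p.1 + 1, p.2 + 1)))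

/-- Vertex set of the flow network `G_λ`. -/
def Gverts (n : ℕ) : Finset (ℕ × ℕ) :=
  ((Finset.Icc 2 n ×ˢ Finset.Icc 2 n).filter (fun p => p.1 ≤ p.2)) ∪
  ((Finset.Icc 3 (n+2)).image (fun i => (i, i-1))) ∪
  ((Finset.Icc 3 (n+1)).image (fun i => (i, n+1)))

/-- Netflow vector of `G_λ`: `λ_{j-1} - λ_j` at `v_{2j}` for `2 ≤ j ≤ n`,
`λ_n - λ_1` at `v_{n+2,n+1}`, and `0` elsewhere. -/
def Gnet (n : ℕ) (lam : ℕ → ℝ) : ℕ × ℕ → ℝ :=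
  fun v => if v.1 = 2 ∧ 2 ≤ v.2 ∧ v.2 ≤ n then lam (v.2 - 1) - lam v.2
    else if v = (n+2, n+1) then lam n - lam 1 else 0

/-- The flow polytope `F_{G_λ}`: nonnegative flows on the edges of `G_λ` satisfying
conservation of flow with the netflow `Gnet`. -/
def FlowSetG (n : ℕ) (lam : ℕ → ℝ) : Set (((ℕ × ℕ) × (ℕ × ℕ)) → ℝ) :=
  {f | (∀ e, e ∉ Gedges n → f e = 0) ∧ (∀ e ∈ Gedges n, 0 ≤ f e) ∧
    ∀ v ∈ Gverts n,
      (∑ e ∈ (Gedges n).filter (fun e => e.2 = v), f e) + Gnet n lam v =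
        ∑ e ∈ (Gedges n).filter (fun e => e.1 = v), f e}

/-- The graphical weight map: `gwt(f)_m` is the total flow on the "a"-edges leaving row
`m+1`, i.e. edges of the form `(v_{m+1,j}, v_{m+2,j})`. -/
def gwtMap (n : ℕ) (f : ((ℕ × ℕ) × (ℕ × ℕ)) → ℝ) : ℕ → ℝ :=
  fun m => if 1 ≤ m ∧ m ≤ n then
      ∑ e ∈ (Gedges n).filter (fun e => e.2.2 = e.1.2 ∧ e.1.1 = m + 1), f e
    else 0

/-- The weight map on triangular arrays: `wt(x)_m = ∑_{j≥m} x_{mj} - ∑_{j≥m+1} x_{m+1,j}`. -/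
def wtMap (n : ℕ) (x : ℕ → ℕ → ℝ) : ℕ → ℝ :=
  fun m => if 1 ≤ m ∧ m ≤ n then
      (∑ j ∈ Finset.Icc m n, x m j) - ∑ j ∈ Finset.Icc (m+1) n, x (m+1) j
    else 0

namespace Stmt8Aux

open Finset

def pa (p : ℕ × ℕ) : (ℕ × ℕ) × (ℕ × ℕ) := ((p.1, p.2), (p.1 + 1, p.2))
def pb (p : ℕ × ℕ) : (ℕ × ℕ) × (ℕ × ℕ) := ((p.1, p.2), (p.1 + 1, p.2 + 1))

lemma pa_inj : Function.Injective pa := by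
  intro p q h
  simp only [pa, Prod.mk.injEq] at h
  exact Prod.ext h.1.1 h.1.2

lemma pb_inj : Function.Injective pb := by
  intro p q h
  simp only [pb, Prod.mk.injEq] at h
  exact Prod.ext h.1.1 h.1.2

lemma Gedges_eq (n : ℕ) : Gedges n = (aPairs n).image pa ∪ (bPairs n).image pb := rfl

lemma mem_aPairs {n : ℕ} {p : ℕ × ℕ} : p ∈ aPairs n ↔
    (2 ≤ p.1 ∧ p.1 ≤ n+1) ∧ (2 ≤ p.2 ∧ p.2 ≤ n+1) ∧
      ((p.1 ≤ p.2 ∧ p.2 ≤ n) ∨ (p.2 = n+1 ∧ 3 ≤ p.1)) := by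
  simp [aPairs, Finset.mem_filter, Finset.mem_product, Finset.mem_Icc, and_assoc]

lemma mem_bPairs {n : ℕ} {p : ℕ × ℕ} : p ∈ bPairs n ↔
    (2 ≤ p.1 ∧ p.1 ≤ n+1) ∧ (1 ≤ p.2 ∧ p.2 ≤ n) ∧
      ((p.1 ≤ p.2 ∧ p.2 ≤ n) ∨ (p.2 + 1 = p.1 ∧ 3 ≤ p.1)) := by
  simp [bPairs, Finset.mem_filter, Finset.mem_product, Finset.mem_Icc, and_assoc]

lemma disj_ab (n : ℕ) : Disjoint ((aPairs n).image pa) ((bPairs n).image pb) := by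
  rw [Finset.disjoint_left]
  rintro e he hb
  simp only [Finset.mem_image] at he hb
  obtain ⟨p, -, hp⟩ := he
  obtain ⟨q, -, hq⟩ := hb
  rw [← hq] at hp
  simp only [pa, pb, Prod.mk.injEq] at hp
  omega

lemma mem_Gedges {n : ℕ} {e : (ℕ × ℕ) × (ℕ × ℕ)} :
    e ∈ Gedges n ↔ (∃ p ∈ aPairs n, pa p = e) ∨ (∃ p ∈ bPairs n, pb p = e) := by
  simp [Gedges_eq, Finset.mem_union, Finset.mem_image]

lemma pa_mem_Gedges {n : ℕ} {p : ℕ × ℕ} (h : pa p ∈ Gedges n) : p ∈ aPairs n := by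
  rw [mem_Gedges] at h
  rcases h with ⟨q, hq, he⟩ | ⟨q, hq, he⟩
  · rwa [pa_inj he] at hq
  · exfalso; simp only [pa, pb, Prod.mk.injEq] at he; omega

lemma pb_mem_Gedges {n : ℕ} {p : ℕ × ℕ} (h : pb p ∈ Gedges n) : p ∈ bPairs n := by
  rw [mem_Gedges] at h
  rcases h with ⟨q, hq, he⟩ | ⟨q, hq, he⟩
  · exfalso; simp only [pa, pb, Prod.mk.injEq] at he; omega
  · rwa [pb_inj he] at hq

lemma edge_shape {n : ℕ} {e : (ℕ × ℕ) × (ℕ × ℕ)} (h : e ∈ Gedges n) :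
    e.2.1 = e.1.1 + 1 := by
  rw [mem_Gedges] at h
  rcases h with ⟨p, -, rfl⟩ | ⟨p, -, rfl⟩ <;> rfl

lemma mem_Gverts_col {n i j : ℕ} (h2 : 2 ≤ i) (hij : i ≤ j) (hjn : j ≤ n) :
    (i, j) ∈ Gverts n := by
  rw [Gverts, Finset.mem_union, Finset.mem_union]
  left; left
  simp only [Finset.mem_filter, Finset.mem_product, Finset.mem_Icc]
  omega

lemma mem_Gverts_diag {n i j : ℕ} (h3 : 3 ≤ i) (hn : i ≤ n + 2) (hj : j + 1 = i) :
    (i, j) ∈ Gverts n := by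
  rw [Gverts, Finset.mem_union, Finset.mem_union]
  left; right
  simp only [Finset.mem_image, Finset.mem_Icc]
  exact ⟨i, ⟨h3, hn⟩, by rw [Prod.mk.injEq]; omega⟩

lemma mem_Gverts_right {n i : ℕ} (h3 : 3 ≤ i) (hn : i ≤ n + 1) :
    (i, n + 1) ∈ Gverts n := by
  rw [Gverts, Finset.mem_union]
  right
  simp only [Finset.mem_image, Finset.mem_Icc]
  exact ⟨i, ⟨h3, hn⟩, rfl⟩

lemma endpoints {n : ℕ} {e : (ℕ × ℕ) × (ℕ × ℕ)} (h : e ∈ Gedges n) :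
    e.1 ∈ Gverts n ∧ e.2 ∈ Gverts n := by
  rw [mem_Gedges] at h
  rcases h with ⟨p, hp, rfl⟩ | ⟨p, hp, rfl⟩
  · rw [mem_aPairs] at hp
    obtain ⟨h1, h2, h3 | h3⟩ := hp
    · constructor
      · exact mem_Gverts_col (by omega) h3.1 h3.2
      · rcases Nat.lt_or_ge p.1 p.2 with hlt | hge
        · exact mem_Gverts_col (by omega) (by omega) h3.2
        · exact mem_Gverts_diag (by omega) (by omega) (by omega)
    · constructor
      · rw [show (pa p).1 = (p.1, n+1) by rw [pa]; rw [h3.1]]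
        exact mem_Gverts_right (by omega) (by omega)
      · rcases Nat.lt_or_ge p.1 (n+1) with hlt | hge
        · rw [show (pa p).2 = (p.1+1, n+1) by rw [pa]; rw [h3.1]]
          exact mem_Gverts_right (by omega) (by omega)
        · exact mem_Gverts_diag (by omega) (by omega) (by omega)
  · rw [mem_bPairs] at hp
    obtain ⟨h1, h2, h3 | h3⟩ := hp
    · constructor
      · exact mem_Gverts_col (by omega) h3.1 h3.2
      · rcases Nat.lt_or_ge p.2 n with hlt | hge
        · exact mem_Gverts_col (by omega) (by omega) (by omega)
        · rw [show (pb p).2 = (p.1+1, n+1) by rw [pb]; rw [Prod.mk.injEq]; omega]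
          exact mem_Gverts_right (by omega) (by omega)
    · constructor
      · exact mem_Gverts_diag (by omega) (by omega) (by omega)
      · exact mem_Gverts_diag (by omega) (by omega) (by omega)

lemma sum_edges_filter (n : ℕ) (f : ((ℕ × ℕ) × (ℕ × ℕ)) → ℝ)
    (P : (ℕ × ℕ) × (ℕ × ℕ) → Prop) [DecidablePred P] :
    ∑ e ∈ (Gedges n).filter P, f e
      = (∑ p ∈ (aPairs n).filter (fun p => P (pa p)), f (pa p))
        + ∑ p ∈ (bPairs n).filter (fun p => P (pb p)), f (pb p) := by
  rw [Gedges_eq, Finset.filter_union,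
    Finset.sum_union (Finset.disjoint_filter_filter (disj_ab n))]
  congr 1
  · rw [Finset.filter_image, Finset.sum_image (fun x _ y _ h => pa_inj h)]
  · rw [Finset.filter_image, Finset.sum_image (fun x _ y _ h => pb_inj h)]

lemma residual (n : ℕ) (lam : ℕ → ℝ) (f : ((ℕ × ℕ) × (ℕ × ℕ)) → ℝ)
    (hf : f ∈ FlowSetG n lam) (Q : ℕ × ℕ → Prop) [DecidablePred Q] :
    (∑ e ∈ (Gedges n).filter (fun e => Q e.2), f e)
      + ∑ v ∈ (Gverts n).filter Q, Gnet n lam v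
    = ∑ e ∈ (Gedges n).filter (fun e => Q e.1), f e := by
  have h2 : ∑ v ∈ (Gverts n).filter Q,
      ((∑ e ∈ (Gedges n).filter (fun e => e.2 = v), f e) + Gnet n lam v)
      = ∑ v ∈ (Gverts n).filter Q, ∑ e ∈ (Gedges n).filter (fun e => e.1 = v), f e :=
    Finset.sum_congr rfl (fun v hv => hf.2.2 v (Finset.mem_filter.mp hv).1)
  rw [Finset.sum_add_distrib, Finset.sum_fiberwise_eq_sum_filter,
    Finset.sum_fiberwise_eq_sum_filter] at h2
  have ha : (Gedges n).filter (fun e => e.2 ∈ (Gverts n).filter Q)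
      = (Gedges n).filter (fun e => Q e.2) :=
    Finset.filter_congr (fun e he => by simp [Finset.mem_filter, (endpoints he).2])
  have hb : (Gedges n).filter (fun e => e.1 ∈ (Gverts n).filter Q)
      = (Gedges n).filter (fun e => Q e.1) :=
    Finset.filter_congr (fun e he => by simp [Finset.mem_filter, (endpoints he).1])
  rw [ha, hb] at h2
  exact h2

lemma tele (lam : ℕ → ℝ) (n : ℕ) : ∀ N, 1 ≤ N → N ≤ n →
    ∑ j ∈ Finset.Icc 2 N, Gnet n lam (2, j) = lam 1 - lam N := by
  intro N
  induction N with
  | zero => omega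
  | succ N ih =>
    intro h1 hn
    rcases Nat.lt_or_ge N 1 with h | h
    · interval_cases N
      simp [Gnet]
    · rw [Finset.sum_Icc_succ_top (by omega), ih h (by omega)]
      have : Gnet n lam (2, N+1) = lam N - lam (N+1) := by
        simp only [Gnet]
        rw [if_pos (by simp; omega)]
        simp
      rw [this]; ring

lemma net_sum (n : ℕ) (lam : ℕ → ℝ) (N : ℕ) (h1 : 1 ≤ N) (hNn : N ≤ n)
    (V : Finset (ℕ × ℕ)) (hsink : (n+2, n+1) ∉ V)
    (hV : V.filter (fun v => v.1 = 2 ∧ 2 ≤ v.2 ∧ v.2 ≤ n)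
        = (Finset.Icc 2 N).image (fun j => (2, j))) :
    ∑ v ∈ V, Gnet n lam v = lam 1 - lam N := by
  rw [← Finset.sum_filter_of_ne (p := fun v => v.1 = 2 ∧ 2 ≤ v.2 ∧ v.2 ≤ n)
    (fun v hv hne => by
      by_contra hP
      rw [Gnet, if_neg hP] at hne
      rcases eq_or_ne v (n+2, n+1) with rfl | hv'
      · exact hsink hv
      · rw [if_neg hv'] at hne; exact hne rfl)]
  rw [hV, Finset.sum_image (fun x _ y _ h => by simpa using h)]
  exact tele lam n N h1 hNn

lemma fb_zero {n : ℕ} {f : ((ℕ × ℕ) × (ℕ × ℕ)) → ℝ} (h0 : ∀ e ∉ Gedges n, f e = 0)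
    {p : ℕ × ℕ} (hp : p ∉ bPairs n) : f (pb p) = 0 :=
  h0 _ (fun h => hp (pb_mem_Gedges h))

lemma sum_b_col {n : ℕ} {f : ((ℕ × ℕ) × (ℕ × ℕ)) → ℝ} (h0 : ∀ e ∉ Gedges n, f e = 0)
    (m : ℕ) (hmn : m ≤ n) :
    ∑ p ∈ (bPairs n).filter (fun p => p.2 = m), f (pb p)
      = ∑ k ∈ Finset.Icc 2 (m+1), f (pb (k, m)) := by
  rw [← Finset.sum_image (g := fun k => ((k, m) : ℕ × ℕ)) (f := fun p => f (pb p))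
    (fun x _ y _ h => by simpa using h)]
  apply Finset.sum_subset
  · intro p hp
    rw [Finset.mem_filter] at hp
    obtain ⟨hpb, hpm⟩ := hp
    rw [mem_bPairs] at hpb
    simp only [Finset.mem_image, Finset.mem_Icc]
    exact ⟨p.1, by omega, Prod.ext rfl hpm.symm⟩
  · intro p hp hnp
    apply fb_zero h0
    intro hmem
    apply hnp
    simp only [Finset.mem_image, Finset.mem_Icc] at hp
    obtain ⟨k, hk, rfl⟩ := hp
    exact Finset.mem_filter.mpr ⟨hmem, rfl⟩

lemma sum_b_row {n : ℕ} {f : ((ℕ × ℕ) × (ℕ × ℕ)) → ℝ} (h0 : ∀ e ∉ Gedges n, f e = 0)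
    (m : ℕ) (h1 : 1 ≤ m) (hmn : m ≤ n) :
    ∑ p ∈ (bPairs n).filter (fun p => p.1 = m+1), f (pb p)
      = ∑ j ∈ Finset.Icc m n, f (pb (m+1, j)) := by
  rw [← Finset.sum_image (g := fun j => ((m+1, j) : ℕ × ℕ)) (f := fun p => f (pb p))
    (fun x _ y _ h => by simpa using h)]
  apply Finset.sum_subset
  · intro p hp
    rw [Finset.mem_filter] at hp
    obtain ⟨hpb, hpm⟩ := hp
    rw [mem_bPairs] at hpb
    simp only [Finset.mem_image, Finset.mem_Icc]
    exact ⟨p.2, by omega, Prod.ext hpm.symm rfl⟩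
  · intro p hp hnp
    apply fb_zero h0
    intro hmem
    apply hnp
    simp only [Finset.mem_image, Finset.mem_Icc] at hp
    obtain ⟨j, hj, rfl⟩ := hp
    exact Finset.mem_filter.mpr ⟨hmem, rfl⟩

lemma eqB (n : ℕ) (lam : ℕ → ℝ) (f : ((ℕ × ℕ) × (ℕ × ℕ)) → ℝ) (hn : 2 ≤ n)
    (hf : f ∈ FlowSetG n lam) (m : ℕ) (h1 : 1 ≤ m) (hmn : m ≤ n) :
    lam 1 - lam m = ∑ k ∈ Finset.Icc 2 (m+1), f (pb (k, m)) := by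
  have hres := residual n lam f hf (fun v => v.2 ≤ m)
  have hnet : ∑ v ∈ (Gverts n).filter (fun v => v.2 ≤ m), Gnet n lam v
      = lam 1 - lam m := by
    apply net_sum n lam m h1 hmn
    · intro h
      have := (Finset.mem_filter.mp h).2
      simp only at this
      omega
    · ext v
      simp only [Finset.mem_filter, Finset.mem_image, Finset.mem_Icc]
      constructor
      · rintro ⟨⟨-, h2⟩, h3, h4, h5⟩
        exact ⟨v.2, ⟨h4, h2⟩, Prod.ext h3.symm rfl⟩
      · rintro ⟨j, ⟨hj2, hjm⟩, rfl⟩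
        exact ⟨⟨mem_Gverts_col (le_refl 2) hj2 (by omega), hjm⟩, rfl, hj2, by omega⟩
  beta_reduce at hres
  rw [hnet, sum_edges_filter, sum_edges_filter] at hres
  have c1 : (aPairs n).filter (fun p => (pa p).2.2 ≤ m)
      = (aPairs n).filter (fun p => p.2 ≤ m) :=
    Finset.filter_congr (fun p _ => Iff.rfl)
  have c2 : (bPairs n).filter (fun p => (pb p).2.2 ≤ m)
      = (bPairs n).filter (fun p => p.2 + 1 ≤ m) :=
    Finset.filter_congr (fun p _ => Iff.rfl)
  have c3 : (aPairs n).filter (fun p => (pa p).1.2 ≤ m)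
      = (aPairs n).filter (fun p => p.2 ≤ m) :=
    Finset.filter_congr (fun p _ => Iff.rfl)
  have c4 : (bPairs n).filter (fun p => (pb p).1.2 ≤ m)
      = (bPairs n).filter (fun p => p.2 ≤ m) :=
    Finset.filter_congr (fun p _ => Iff.rfl)
  rw [c1, c2, c3, c4] at hres
  have hsplit := Finset.sum_filter_add_sum_filter_not
    ((bPairs n).filter (fun p => p.2 ≤ m)) (fun p => p.2 + 1 ≤ m)
    (fun p => f (pb p))
  rw [Finset.filter_filter, Finset.filter_filter] at hsplit
  have d1 : (bPairs n).filter (fun a => a.2 ≤ m ∧ a.2 + 1 ≤ m)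
      = (bPairs n).filter (fun p => p.2 + 1 ≤ m) :=
    Finset.filter_congr (fun p _ => by omega)
  have d2 : (bPairs n).filter (fun a => a.2 ≤ m ∧ ¬a.2 + 1 ≤ m)
      = (bPairs n).filter (fun p => p.2 = m) :=
    Finset.filter_congr (fun p _ => by omega)
  rw [d1, d2] at hsplit
  rw [← sum_b_col hf.1 m hmn]
  linarith [hsplit]

lemma eqA (n : ℕ) (lam : ℕ → ℝ) (f : ((ℕ × ℕ) × (ℕ × ℕ)) → ℝ) (hn : 2 ≤ n)
    (hf : f ∈ FlowSetG n lam) (m : ℕ) (h1 : 1 ≤ m) (hmn : m ≤ n) :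
    lam 1 - lam n = (∑ p ∈ (aPairs n).filter (fun p => p.1 = m+1), f (pa p))
      + ∑ j ∈ Finset.Icc m n, f (pb (m+1, j)) := by
  have hres := residual n lam f hf (fun v => v.1 ≤ m+1)
  have hnet : ∑ v ∈ (Gverts n).filter (fun v => v.1 ≤ m+1), Gnet n lam v
      = lam 1 - lam n := by
    apply net_sum n lam n (by omega) le_rfl
    · intro h
      have := (Finset.mem_filter.mp h).2
      simp only at this
      omega
    · ext v
      simp only [Finset.mem_filter, Finset.mem_image, Finset.mem_Icc]
      constructor
      · rintro ⟨⟨-, h2⟩, h3, h4, h5⟩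
        exact ⟨v.2, ⟨h4, h5⟩, Prod.ext h3.symm rfl⟩
      · rintro ⟨j, ⟨hj2, hjn⟩, rfl⟩
        exact ⟨⟨mem_Gverts_col (le_refl 2) hj2 hjn, by omega⟩, rfl, hj2, hjn⟩
  beta_reduce at hres
  rw [hnet] at hres
  have hin : (Gedges n).filter (fun e => e.2.1 ≤ m + 1)
      = (Gedges n).filter (fun e => e.1.1 ≤ m) :=
    Finset.filter_congr (fun e he => by rw [edge_shape he]; omega)
  rw [hin] at hres
  have hsplit := Finset.sum_filter_add_sum_filter_not
    ((Gedges n).filter (fun e => e.1.1 ≤ m+1)) (fun e => e.1.1 ≤ m) f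
  rw [Finset.filter_filter, Finset.filter_filter] at hsplit
  have d1 : (Gedges n).filter (fun a => a.1.1 ≤ m+1 ∧ a.1.1 ≤ m)
      = (Gedges n).filter (fun e => e.1.1 ≤ m) :=
    Finset.filter_congr (fun p _ => by omega)
  have d2 : (Gedges n).filter (fun a => a.1.1 ≤ m+1 ∧ ¬a.1.1 ≤ m)
      = (Gedges n).filter (fun e => e.1.1 = m+1) :=
    Finset.filter_congr (fun p _ => by omega)
  rw [d1, d2] at hsplit
  have hm1 : ∑ e ∈ (Gedges n).filter (fun e => e.1.1 = m+1), f e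
      = (∑ p ∈ (aPairs n).filter (fun p => p.1 = m+1), f (pa p))
        + ∑ j ∈ Finset.Icc m n, f (pb (m+1, j)) := by
    rw [sum_edges_filter]
    have ca : (aPairs n).filter (fun p => (pa p).1.1 = m+1)
        = (aPairs n).filter (fun p => p.1 = m+1) :=
      Finset.filter_congr (fun p _ => Iff.rfl)
    have cb : (bPairs n).filter (fun p => (pb p).1.1 = m+1)
        = (bPairs n).filter (fun p => p.1 = m+1) :=
      Finset.filter_congr (fun p _ => Iff.rfl)
    rw [ca, cb, sum_b_row hf.1 m h1 hmn]
  linarith [hsplit, hm1]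

lemma gwt_eq (n : ℕ) (f : ((ℕ × ℕ) × (ℕ × ℕ)) → ℝ) (m : ℕ) (h1 : 1 ≤ m) (hmn : m ≤ n) :
    gwtMap n f m = ∑ p ∈ (aPairs n).filter (fun p => p.1 = m+1), f (pa p) := by
  rw [gwtMap]
  simp only [if_pos (And.intro h1 hmn)]
  rw [sum_edges_filter]
  have c1 : (aPairs n).filter (fun p => (pa p).2.2 = (pa p).1.2 ∧ (pa p).1.1 = m+1)
      = (aPairs n).filter (fun p => p.1 = m+1) :=
    Finset.filter_congr (fun p _ => by simp [pa])
  have c2 : (bPairs n).filter (fun p => (pb p).2.2 = (pb p).1.2 ∧ (pb p).1.1 = m+1)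
      = ∅ :=
    Finset.filter_false_of_mem (fun p _ => by simp [pb])
  rw [c1, c2, Finset.sum_empty, add_zero]

end Stmt8Aux

/-- For `f ∈ F_{G_λ}` with corresponding Gelfand-Tsetlin pattern
`P_f` (via `x_{ij} = λ_j + ∑_{k=2}^{i} b_{kj}`), we have `wt(P_f) = gwt(f) + λ_n·𝟙_n`. -/
theorem stmt8 (n : ℕ) (hn : 2 ≤ n) (lam : ℕ → ℤ)
    (hnn : ∀ k, 0 ≤ lam k) (hdec : ∀ k, 1 ≤ k → k < n → lam (k+1) ≤ lam k) :
    ∀ f ∈ FlowSetG n (fun j => (lam j : ℝ)), ∀ m, 1 ≤ m → m ≤ n →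
      wtMap n (fun i j => if 1 ≤ i ∧ i ≤ j ∧ j ≤ n then
          (lam j : ℝ) + ∑ k ∈ Finset.Icc 2 i, f ((k, j), (k + 1, j + 1)) else 0) m =
        gwtMap n f m + (lam n : ℝ) := by
  intro f hf m h1 hmn
  have hB := Stmt8Aux.eqB n (fun j => (lam j : ℝ)) f hn hf m h1 hmn
  have hA := Stmt8Aux.eqA n (fun j => (lam j : ℝ)) f hn hf m h1 hmn
  have hgwt := Stmt8Aux.gwt_eq n f m h1 hmn
  simp only [Stmt8Aux.pb] at hB hA
  have hins : Finset.Icc m n = insert m (Finset.Icc (m+1) n) := by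
    ext a; simp only [Finset.mem_insert, Finset.mem_Icc]; omega
  have hnotmem : m ∉ Finset.Icc (m+1) n := by
    simp only [Finset.mem_Icc]; omega
  have h2 : ∑ j ∈ Finset.Icc (m+1) n, (if 1 ≤ m+1 ∧ m+1 ≤ j ∧ j ≤ n then
        (lam j : ℝ) + ∑ k ∈ Finset.Icc 2 (m+1), f ((k, j), (k + 1, j + 1)) else 0)
      = (∑ j ∈ Finset.Icc (m+1) n,
          ((lam j : ℝ) + ∑ k ∈ Finset.Icc 2 m, f ((k, j), (k + 1, j + 1))))
        + ∑ j ∈ Finset.Icc (m+1) n, f ((m+1, j), (m+1+1, j+1)) := by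
    rw [← Finset.sum_add_distrib]
    apply Finset.sum_congr rfl
    intro j hj
    rw [Finset.mem_Icc] at hj
    rw [if_pos ⟨by omega, by omega, hj.2⟩, Finset.sum_Icc_succ_top (by omega)]
    ring
  have h3 : ∑ j ∈ Finset.Icc m n, (if 1 ≤ m ∧ m ≤ j ∧ j ≤ n then
        (lam j : ℝ) + ∑ k ∈ Finset.Icc 2 m, f ((k, j), (k + 1, j + 1)) else 0)
      = ((lam m : ℝ) + ∑ k ∈ Finset.Icc 2 m, f ((k, m), (k + 1, m + 1)))
        + ∑ j ∈ Finset.Icc (m+1) n,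
            ((lam j : ℝ) + ∑ k ∈ Finset.Icc 2 m, f ((k, j), (k + 1, j + 1))) := by
    rw [hins, Finset.sum_insert hnotmem, if_pos ⟨h1, le_rfl, hmn⟩]
    congr 1
    apply Finset.sum_congr rfl
    intro j hj
    rw [Finset.mem_Icc] at hj
    rw [if_pos ⟨h1, by omega, hj.2⟩]
  have h4 : ∑ j ∈ Finset.Icc m n, f ((m+1, j), (m+1+1, j+1))
      = f ((m+1, m), (m+1+1, m+1)) + ∑ j ∈ Finset.Icc (m+1) n, f ((m+1, j), (m+1+1, j+1)) := by
    rw [hins, Finset.sum_insert hnotmem]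
  have h5 : ∑ k ∈ Finset.Icc 2 (m+1), f ((k, m), (k+1, m+1))
      = (∑ k ∈ Finset.Icc 2 m, f ((k, m), (k+1, m+1))) + f ((m+1, m), (m+1+1, m+1)) :=
    Finset.sum_Icc_succ_top (by omega) _
  simp only [wtMap]
  rw [if_pos (show 1 ≤ m ∧ m ≤ n from ⟨h1, hmn⟩), hgwt, h2, h3]
  rw [h4] at hA
  rw [h5] at hB
  linarith [hA, hB]
end

section
/- The permutahedron P_λ = Conv(Sₙ · λ) of a partition λ with n parts equals the Minkowski sum (λ₁-λ₂)Δ_{1,n} + (λ₂-λ₃)Δ_{2,n} + ··· + (λ_{n-1}-λₙ)Δ_{n-1,n} + λₙΔ_{n,n} of dilated hypersimplices. -/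
open Pointwise

def hypersimplex (n k : ℕ) : Set (Fin n → ℝ) :=
  convexHull ℝ {x | (∀ i, x i = 0 ∨ x i = 1) ∧ (∑ i, x i) = (k : ℝ)}


namespace Stmt9Aux
open Finset

lemma tele (L : ℕ → ℝ) (a b : ℕ) (h : a ≤ b + 1) :
    ∑ k ∈ Finset.Icc a b, (L k - L (k+1)) = L a - L (b+1) := by
  rw [← Finset.Ico_add_one_right_eq_Icc, Finset.sum_Ico_eq_sum_range]
  have h2 := Finset.sum_range_sub' (fun i => L (a + i)) (b + 1 - a)
  calc ∑ i ∈ Finset.range (b+1-a), (L (a+i) - L (a+i+1))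
      = ∑ i ∈ Finset.range (b+1-a), ((fun i => L (a+i)) i - (fun i => L (a+i)) (i+1)) := by
        apply Finset.sum_congr rfl; intro i _; simp [Nat.add_assoc]
    _ = L a - L (a + (b+1-a)) := by rw [h2]; simp
    _ = L a - L (b+1) := by congr 2; omega

lemma abel' : ∀ (N : ℕ) (u d : ℕ → ℝ),
    (∀ i j, i ≤ j → j < N → u j ≤ u i) →
    (∀ m, m ≤ N → ∑ t ∈ Finset.range m, d t ≤ 0) →
    (∑ t ∈ Finset.range N, d t = 0) →
    ∑ t ∈ Finset.range N, u t * d t ≤ 0 := by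
  intro N
  induction N with
  | zero => simp
  | succ N ih =>
    intro u d hu hS hN
    rcases Nat.eq_zero_or_pos N with h0 | hpos
    · subst h0
      rw [Finset.sum_range_one]
      rw [Finset.sum_range_one] at hN
      rw [hN, mul_zero]
    · have hSN : ∑ t ∈ Finset.range N, d t ≤ 0 := hS N (Nat.le_succ N)
      have hdN : 0 ≤ d N := by
        rw [Finset.sum_range_succ] at hN; linarith
      have hsum' : ∑ t ∈ Finset.range N,
          (d t + if t = N - 1 then d N else 0) = (∑ t ∈ Finset.range N, d t) + d N := by
        rw [Finset.sum_add_distrib]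
        congr 1
        rw [Finset.sum_ite_eq' (Finset.range N) (N-1) (fun _ => d N)]
        have : N - 1 ∈ Finset.range N := by simp; omega
        simp [this]
      have key : ∑ t ∈ Finset.range N,
          u t * (d t + if t = N - 1 then d N else 0) ≤ 0 := by
        apply ih u _ (fun i j hij hj => hu i j hij (by omega))
        · intro m hm
          rcases Nat.lt_or_ge m N with hmN | hmN
          · have he : ∑ t ∈ Finset.range m, (d t + if t = N - 1 then d N else 0)
                = ∑ t ∈ Finset.range m, d t := by
              apply Finset.sum_congr rfl; intro t ht
              simp only [Finset.mem_range] at ht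
              have ht' : t ≠ N - 1 := by omega
              simp [ht']
            rw [he]; exact hS m (by omega)
          · have hm' : m = N := by omega
            subst hm'
            rw [hsum', ← Finset.sum_range_succ]; exact le_of_eq hN
        · rw [hsum', ← Finset.sum_range_succ]; exact hN
      have expand : ∑ t ∈ Finset.range N, u t * (d t + if t = N - 1 then d N else 0)
          = (∑ t ∈ Finset.range N, u t * d t) + u (N-1) * d N := by
        simp only [mul_add, Finset.sum_add_distrib]
        congr 1
        have : ∀ t, u t * (if t = N - 1 then d N else 0)
            = (if t = N - 1 then u t * d N else 0) := by
          intro t; split <;> simp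
        simp only [this]
        rw [Finset.sum_ite_eq' (Finset.range N) (N-1) (fun t => u t * d N)]
        have : N - 1 ∈ Finset.range N := by simp; omega
        simp [this]
      rw [Finset.sum_range_succ]
      have huN : u N ≤ u (N-1) := hu (N-1) N (by omega) (by omega)
      nlinarith [mul_le_mul_of_nonneg_right huN hdN]

lemma ident (n : ℕ) (hn : 1 ≤ n) (L : ℕ → ℝ) :
    ∀ m, m ≤ n → ∑ k ∈ Finset.range m, L (k+1) =
      (∑ k ∈ Finset.Icc 1 (n-1), (L k - L (k+1)) * min (k:ℝ) (m:ℝ)) + L n * m := by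
  intro m
  induction m with
  | zero => simp
  | succ m ih =>
    intro hm
    have ihm := ih (by omega)
    rw [Finset.sum_range_succ, ihm]
    have step : ∀ k ∈ Finset.Icc 1 (n-1),
        (L k - L (k+1)) * min (k:ℝ) ((m+1:ℕ):ℝ)
        = (L k - L (k+1)) * min (k:ℝ) (m:ℝ)
          + (if m+1 ≤ k then (L k - L (k+1)) else 0) := by
      intro k hk
      rcases le_or_gt (m+1) k with h | h
      · have h1 : min (k:ℝ) ((m+1:ℕ):ℝ) = ((m+1:ℕ):ℝ) := by
          apply min_eq_right; exact_mod_cast h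
        have h2 : min (k:ℝ) (m:ℝ) = (m:ℝ) := by
          apply min_eq_right; exact_mod_cast (by omega : m ≤ k)
        rw [h1, h2, if_pos h]; push_cast; ring
      · have h1 : min (k:ℝ) ((m+1:ℕ):ℝ) = (k:ℝ) := by
          apply min_eq_left; exact_mod_cast (by omega : k ≤ m+1)
        have h2 : min (k:ℝ) (m:ℝ) = (k:ℝ) := by
          apply min_eq_left; exact_mod_cast (by omega : k ≤ m)
        rw [h1, h2, if_neg (by omega)]; ring
    rw [Finset.sum_congr rfl step, Finset.sum_add_distrib]
    rw [Finset.sum_ite, Finset.sum_const_zero, add_zero]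
    have hfil : (Finset.Icc 1 (n-1)).filter (fun k => m+1 ≤ k) = Finset.Icc (m+1) (n-1) := by
      ext t; simp only [Finset.mem_filter, Finset.mem_Icc]; omega
    rw [hfil, tele L (m+1) (n-1) (by omega)]
    have : n - 1 + 1 = n := by omega
    rw [this]
    push_cast
    ring

lemma mem_finsetSum' {E : Type*} [AddCommMonoid E] [DecidableEq ℕ]
    (F : Finset ℕ) (s : ℕ → Set E) (x : E) :
    x ∈ ∑ k ∈ F, s k ↔ ∃ f : ℕ → E, (∀ k ∈ F, f k ∈ s k) ∧ ∑ k ∈ F, f k = x := by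
  induction F using Finset.induction_on generalizing x with
  | empty =>
    simp only [Finset.sum_empty]
    constructor
    · intro hx
      exact ⟨fun _ => 0, by simp, by rw [Set.mem_zero] at hx; simp [hx]⟩
    · rintro ⟨f, -, rfl⟩; exact Set.mem_zero.mpr rfl
  | insert _ _ ha ih =>
    rename_i a F
    rw [Finset.sum_insert ha, Set.mem_add]
    constructor
    · rintro ⟨y, hy, z, hz, rfl⟩
      obtain ⟨f, hf, rfl⟩ := (ih z).mp hz
      refine ⟨Function.update f a y, ?_, ?_⟩
      · intro k hk
        rcases Finset.mem_insert.mp hk with rfl | hk'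
        · rw [Function.update_self]; exact hy
        · rw [Function.update_of_ne (by rintro rfl; exact ha hk')]; exact hf k hk'
      · rw [Finset.sum_insert ha, Function.update_self]
        congr 1
        apply Finset.sum_congr rfl
        intro k hk
        rw [Function.update_of_ne (by rintro rfl; exact ha hk)]
    · rintro ⟨f, hf, rfl⟩
      exact ⟨f a, hf a (Finset.mem_insert_self a F), ∑ k ∈ F, f k,
        (ih _).mpr ⟨f, fun k hk => hf k (Finset.mem_insert_of_mem hk), rfl⟩,
        (Finset.sum_insert ha).symm⟩

lemma convexHull_finsetSum' {E : Type*} [AddCommGroup E] [Module ℝ E]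
    (F : Finset ℕ) (s : ℕ → Set E) :
    convexHull ℝ (∑ k ∈ F, s k) = ∑ k ∈ F, convexHull ℝ (s k) := by
  classical
  induction F using Finset.induction_on with
  | empty =>
    simp only [Finset.sum_empty]
    have : (0 : Set E) = {(0:E)} := rfl
    rw [this, convexHull_singleton]
  | insert _ _ ha ih =>
    rw [Finset.sum_insert ha, Finset.sum_insert ha, convexHull_add, ih]

lemma vertex_bounds {n j : ℕ} {c : ℝ} (hc : 0 ≤ c) {x : Fin n → ℝ}
    (hx : x ∈ c • {y : Fin n → ℝ | (∀ i, y i = 0 ∨ y i = 1) ∧ (∑ i, y i) = (j:ℝ)}) :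
    (∀ T : Finset (Fin n), ∑ i ∈ T, x i ≤ c * min (j:ℝ) (T.card : ℝ))
      ∧ (∑ i, x i = c * j) := by
  obtain ⟨y, ⟨h01, hsum⟩, rfl⟩ := Set.mem_smul_set.mp hx
  have h0 : ∀ i, 0 ≤ y i := fun i => by rcases h01 i with h | h <;> rw [h] <;> norm_num
  have h1 : ∀ i, y i ≤ 1 := fun i => by rcases h01 i with h | h <;> rw [h] <;> norm_num
  constructor
  · intro T
    have e1 : ∑ i ∈ T, (c • y) i = c * ∑ i ∈ T, y i := by
      simp [Finset.mul_sum]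
    rw [e1]
    apply mul_le_mul_of_nonneg_left _ hc
    apply le_min
    · calc ∑ i ∈ T, y i ≤ ∑ i, y i :=
            Finset.sum_le_sum_of_subset_of_nonneg (Finset.subset_univ T)
              (fun i _ _ => h0 i)
        _ = (j:ℝ) := hsum
    · calc ∑ i ∈ T, y i ≤ ∑ _i ∈ T, (1:ℝ) := Finset.sum_le_sum (fun i _ => h1 i)
        _ = (T.card : ℝ) := by simp
  · have e1 : ∑ i, (c • y) i = c * ∑ i, y i := by simp [Finset.mul_sum]
    rw [e1, hsum]

lemma rado (n : ℕ) (hn : 1 ≤ n) (Λ : ℕ → ℝ) (p : Fin n → ℝ)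
    (hM1 : ∀ T : Finset (Fin n), ∑ i ∈ T, p i ≤ ∑ k ∈ Finset.range T.card, Λ k)
    (hM2 : ∑ i, p i = ∑ k ∈ Finset.range n, Λ k) :
    p ∈ convexHull ℝ {x : Fin n → ℝ | ∃ σ : Equiv.Perm (Fin n), ∀ i, x i = Λ ((σ i : ℕ))} := by
  classical
  have hnpos : 0 < n := hn
  -- Key: for every linear functional given by weights w, some orbit point dominates p
  have key : ∀ w : Fin n → ℝ, ∃ σ : Equiv.Perm (Fin n),
      ∑ i, w i * p i ≤ ∑ i, w i * Λ ((σ i : ℕ)) := by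
    intro w
    set τ : Equiv.Perm (Fin n) := Tuple.sort w with hτ
    set π : Equiv.Perm (Fin n) := Fin.revPerm.trans τ with hπ
    have hπ_apply : ∀ x : Fin n, π x = τ (Fin.rev x) := fun x => rfl
    set e : ℕ → Fin n := fun t => ⟨t % n, Nat.mod_lt t hnpos⟩ with he
    have he_lt : ∀ t, t < n → (e t : ℕ) = t := fun t ht => Nat.mod_eq_of_lt ht
    set U : ℕ → ℝ := fun t => w (π (e t)) with hU
    set D : ℕ → ℝ := fun t => p (π (e t)) - Λ t with hD
    -- U is decreasing on range n
    have hu : ∀ i j, i ≤ j → j < n → U j ≤ U i := by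
      intro i j hij hj
      have hei : (e i : ℕ) = i := he_lt i (by omega)
      have hej : (e j : ℕ) = j := he_lt j hj
      have h1 : e i ≤ e j := by rw [Fin.le_def, hei, hej]; exact hij
      have h2 : Fin.rev (e j) ≤ Fin.rev (e i) := Fin.rev_le_rev.mpr h1
      have := Tuple.monotone_sort w h2
      simpa [hU, hπ_apply] using this
    -- injectivity of t ↦ π (e t) on range m for m ≤ n
    have hinj : ∀ m, m ≤ n → Set.InjOn (fun t => π (e t)) ↑(Finset.range m) := by
      intro m hm t1 ht1 t2 ht2 heq
      simp only [Finset.coe_range, Set.mem_Iio] at ht1 ht2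
      have := π.injective heq
      have h1 : (e t1 : ℕ) = (e t2 : ℕ) := by rw [this]
      rwa [he_lt t1 (by omega), he_lt t2 (by omega)] at h1
    -- partial sums of p along π ∘ e are dominated
    have hps : ∀ m, m ≤ n →
        ∑ t ∈ Finset.range m, p (π (e t)) ≤ ∑ k ∈ Finset.range m, Λ k := by
      intro m hm
      set T : Finset (Fin n) := (Finset.range m).image (fun t => π (e t)) with hT
      have hcard : T.card = m := by
        rw [hT, Finset.card_image_of_injOn (hinj m hm), Finset.card_range]
      have hsumT : ∑ i ∈ T, p i = ∑ t ∈ Finset.range m, p (π (e t)) := by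
        rw [hT, Finset.sum_image (fun a ha b hb => hinj m hm ha hb)]
      calc ∑ t ∈ Finset.range m, p (π (e t)) = ∑ i ∈ T, p i := hsumT.symm
        _ ≤ ∑ k ∈ Finset.range T.card, Λ k := hM1 T
        _ = ∑ k ∈ Finset.range m, Λ k := by rw [hcard]
    -- total equality
    have htot : ∑ t ∈ Finset.range n, p (π (e t)) = ∑ k ∈ Finset.range n, Λ k := by
      have h1 : ∑ t ∈ Finset.range n, p (π (e t)) = ∑ i : Fin n, p (π (e (i : ℕ))) :=
        (Fin.sum_univ_eq_sum_range (fun t => p (π (e t))) n).symm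
      have h2 : ∀ i : Fin n, e (i : ℕ) = i := by
        intro i; apply Fin.ext; exact he_lt i i.isLt
      rw [h1]
      simp only [h2]
      rw [Equiv.sum_comp π p]
      exact hM2
    -- apply Abel
    have habel := abel' n U D hu
      (by
        intro m hm
        have : ∑ t ∈ Finset.range m, D t
            = (∑ t ∈ Finset.range m, p (π (e t))) - ∑ k ∈ Finset.range m, Λ k := by
          simp [hD, Finset.sum_sub_distrib]
        rw [this, sub_nonpos]
        exact hps m hm)
      (by
        have : ∑ t ∈ Finset.range n, D t
            = (∑ t ∈ Finset.range n, p (π (e t))) - ∑ k ∈ Finset.range n, Λ k := by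
          simp [hD, Finset.sum_sub_distrib]
        rw [this, htot, sub_self])
    -- unfold Abel's conclusion
    have hconc : ∑ t ∈ Finset.range n, U t * p (π (e t))
        ≤ ∑ t ∈ Finset.range n, U t * Λ t := by
      have : ∑ t ∈ Finset.range n, U t * D t
          = (∑ t ∈ Finset.range n, U t * p (π (e t)))
            - ∑ t ∈ Finset.range n, U t * Λ t := by
        simp [hD, mul_sub, Finset.sum_sub_distrib]
      rw [this, sub_nonpos] at habel
      exact habel
    refine ⟨π⁻¹, ?_⟩
    have hL : ∑ i, w i * p i = ∑ t ∈ Finset.range n, U t * p (π (e t)) := by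
      rw [← Equiv.sum_comp π (fun i => w i * p i)]
      rw [← Fin.sum_univ_eq_sum_range (fun t => U t * p (π (e t))) n]
      apply Finset.sum_congr rfl
      intro i _
      have h2 : e (i : ℕ) = i := by apply Fin.ext; exact he_lt i i.isLt
      simp [hU, h2]
    have hR : ∑ i, w i * Λ ((π⁻¹ i : Fin n) : ℕ) = ∑ t ∈ Finset.range n, U t * Λ t := by
      rw [← Equiv.sum_comp π (fun i => w i * Λ ((π⁻¹ i : Fin n) : ℕ))]
      rw [← Fin.sum_univ_eq_sum_range (fun t => U t * Λ t) n]
      apply Finset.sum_congr rfl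
      intro i _
      have h2 : e (i : ℕ) = i := by apply Fin.ext; exact he_lt i i.isLt
      simp [hU, h2]
    rw [hL, hR]
    exact hconc
  -- separation argument
  by_contra hc
  set O : Set (Fin n → ℝ) :=
    {x : Fin n → ℝ | ∃ σ : Equiv.Perm (Fin n), ∀ i, x i = Λ ((σ i : ℕ))} with hO
  have hOfin : O.Finite := by
    have : O = Set.range (fun σ : Equiv.Perm (Fin n) => fun i => Λ ((σ i : ℕ))) := by
      ext x
      constructor
      · rintro ⟨σ, hσ⟩; exact ⟨σ, by funext i; exact (hσ i).symm⟩
      · rintro ⟨σ, rfl⟩; exact ⟨σ, fun i => rfl⟩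
    rw [this]
    exact Set.finite_range _
  have hclosed : IsClosed (convexHull ℝ O) := (hOfin.isCompact_convexHull (𝕜 := ℝ)).isClosed
  obtain ⟨f, u, hfu, hup⟩ :=
    geometric_hahn_banach_closed_point (convex_convexHull ℝ O) hclosed hc
  set w : Fin n → ℝ := fun i => f (Pi.single i 1) with hw
  have hfx : ∀ x : Fin n → ℝ, f x = ∑ i, x i * w i := by
    intro x
    have hbasis : ∀ i : Fin n, (fun j => if i = j then (1:ℝ) else 0) = Pi.single i 1 := by
      intro i; funext j; simp [Pi.single_apply, eq_comm]
    conv_lhs => rw [pi_eq_sum_univ x]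
    rw [map_sum]
    apply Finset.sum_congr rfl
    intro i _
    rw [hbasis i, map_smul, smul_eq_mul]
  obtain ⟨σ, hσ⟩ := key w
  set z : Fin n → ℝ := fun i => Λ ((σ i : ℕ)) with hz
  have hzO : z ∈ O := ⟨σ, fun i => rfl⟩
  have h1 : f z < u := hfu z (subset_convexHull ℝ O hzO)
  have h2 : f p ≤ f z := by rw [hfx p, hfx z]; simpa [hz, mul_comm] using hσ
  linarith

end Stmt9Aux

open Stmt9Aux Finset in
/-- The permutahedron `P_λ = Conv(Sₙ·λ)` equals
`(λ₁-λ₂)Δ_{1,n} + ⋯ + (λ_{n-1}-λ_n)Δ_{n-1,n} + λ_n Δ_{n,n}`. -/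
theorem stmt9 (n : ℕ) (hn : 1 ≤ n) (lam : ℕ → ℤ)
    (hnn : ∀ k, 0 ≤ lam k) (hdec : ∀ k, 1 ≤ k → k < n → lam (k+1) ≤ lam k) :
    convexHull ℝ {x : Fin n → ℝ |
        ∃ σ : Equiv.Perm (Fin n), ∀ i, x i = (lam ((σ i : ℕ) + 1) : ℝ)} =
      (∑ k ∈ Finset.Icc 1 (n-1), ((lam k : ℝ) - (lam (k+1) : ℝ)) • hypersimplex n k)
        + (lam n : ℝ) • hypersimplex n n := by
  classical
  -- notation
  have hc : ∀ k, 1 ≤ k → k ≤ n - 1 → (0:ℝ) ≤ (lam k : ℝ) - (lam (k+1) : ℝ) := by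
    intro k h1 h2
    have := hdec k h1 (by omega)
    have : (lam (k+1) : ℝ) ≤ (lam k : ℝ) := by exact_mod_cast this
    linarith
  have hcn : (0:ℝ) ≤ (lam n : ℝ) := by exact_mod_cast hnn n
  -- rewrite RHS as a single convex hull
  have hrhs : (∑ k ∈ Finset.Icc 1 (n-1), ((lam k : ℝ) - (lam (k+1) : ℝ)) • hypersimplex n k)
        + (lam n : ℝ) • hypersimplex n n
      = convexHull ℝ ((∑ k ∈ Finset.Icc 1 (n-1), ((lam k : ℝ) - (lam (k+1) : ℝ)) •
          {x : Fin n → ℝ | (∀ i, x i = 0 ∨ x i = 1) ∧ (∑ i, x i) = (k : ℝ)})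
        + (lam n : ℝ) • {x : Fin n → ℝ | (∀ i, x i = 0 ∨ x i = 1) ∧ (∑ i, x i) = (n : ℝ)}) := by
    rw [convexHull_add, convexHull_finsetSum']
    congr 1
    · apply Finset.sum_congr rfl
      intro k _
      rw [convexHull_smul]
      rfl
    · rw [convexHull_smul]
      rfl
  rw [hrhs]
  apply Set.Subset.antisymm
  · -- orbit ⊆ vertex Minkowski sum
    apply convexHull_mono
    rintro x ⟨σ, hx⟩
    set g : Fin n → ℝ :=
      ∑ k ∈ Finset.Icc 1 (n-1), ((lam k : ℝ) - (lam (k+1) : ℝ)) •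
        (fun i => if ((σ i : ℕ)) < k then (1:ℝ) else 0) with hg
    set z : Fin n → ℝ := (lam n : ℝ) • (fun _ => (1:ℝ)) with hz
    have hmem1 : g ∈ ∑ k ∈ Finset.Icc 1 (n-1), ((lam k : ℝ) - (lam (k+1) : ℝ)) •
        {x : Fin n → ℝ | (∀ i, x i = 0 ∨ x i = 1) ∧ (∑ i, x i) = (k : ℝ)} := by
      rw [mem_finsetSum']
      refine ⟨fun k => ((lam k : ℝ) - (lam (k+1) : ℝ)) •
        (fun i => if ((σ i : ℕ)) < k then (1:ℝ) else 0), ?_, rfl⟩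
      intro k hk
      simp only [Finset.mem_Icc] at hk
      apply Set.smul_mem_smul_set
      constructor
      · intro i
        by_cases h : (σ i : ℕ) < k
        · right; simp [h]
        · left; simp [h]
      · have h1 : ∑ i : Fin n, (if ((σ i : ℕ)) < k then (1:ℝ) else 0)
            = ∑ i : Fin n, (if ((i : ℕ)) < k then (1:ℝ) else 0) :=
          Equiv.sum_comp σ (fun i => if ((i : ℕ)) < k then (1:ℝ) else 0)
        have h2 : ∑ i : Fin n, (if ((i : ℕ)) < k then (1:ℝ) else 0)
            = ∑ t ∈ Finset.range n, (if t < k then (1:ℝ) else 0) :=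
          Fin.sum_univ_eq_sum_range (fun t => if t < k then (1:ℝ) else 0) n
        have h3 : (Finset.range n).filter (fun t => t < k) = Finset.range k := by
          ext t; simp only [Finset.mem_filter, Finset.mem_range]; omega
        rw [h1, h2, Finset.sum_boole, h3, Finset.card_range]
    have hmem2 : z ∈ (lam n : ℝ) •
        {x : Fin n → ℝ | (∀ i, x i = 0 ∨ x i = 1) ∧ (∑ i, x i) = (n : ℝ)} := by
      apply Set.smul_mem_smul_set
      refine ⟨fun i => Or.inr rfl, ?_⟩
      simp
    have hxgz : x = g + z := by
      funext i
      rw [hx i]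
      have e1 : (g + z) i = g i + z i := rfl
      have e2 : g i = ∑ k ∈ Finset.Icc 1 (n-1),
          (if (σ i : ℕ) < k then ((lam k : ℝ) - (lam (k+1) : ℝ)) else 0) := by
        rw [hg, Finset.sum_apply]
        apply Finset.sum_congr rfl
        intro k _
        simp only [Pi.smul_apply, smul_eq_mul, mul_ite, mul_one, mul_zero]
      have e3 : ∑ k ∈ Finset.Icc 1 (n-1),
          (if (σ i : ℕ) < k then ((lam k : ℝ) - (lam (k+1) : ℝ)) else 0)
          = ∑ k ∈ Finset.Icc ((σ i : ℕ)+1) (n-1), ((lam k : ℝ) - (lam (k+1) : ℝ)) := by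
        rw [Finset.sum_ite, Finset.sum_const_zero, add_zero]
        congr 1
        ext t; simp only [Finset.mem_filter, Finset.mem_Icc]; omega
      have e4 := tele (fun k => (lam k : ℝ)) ((σ i : ℕ)+1) (n-1)
        (by have := (σ i).isLt; omega)
      have e5 : n - 1 + 1 = n := by omega
      rw [e5] at e4
      have e6 : z i = (lam n : ℝ) := by simp [hz]
      rw [e1, e2, e3, e4, e6]
      ring
    rw [hxgz]
    exact Set.add_mem_add hmem1 hmem2
  · -- vertex Minkowski sum ⊆ permutahedron
    apply convexHull_min _ (convex_convexHull ℝ _)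
    intro x hx
    obtain ⟨g, hg, z, hz, rfl⟩ := Set.mem_add.mp hx
    obtain ⟨f, hf, rfl⟩ := (mem_finsetSum' _ _ _).mp hg
    have hb : ∀ k ∈ Finset.Icc 1 (n-1),
        (∀ T : Finset (Fin n), ∑ i ∈ T, f k i ≤
          ((lam k : ℝ) - (lam (k+1) : ℝ)) * min (k:ℝ) (T.card:ℝ))
          ∧ (∑ i, f k i = ((lam k : ℝ) - (lam (k+1) : ℝ)) * k) := by
      intro k hk
      simp only [Finset.mem_Icc] at hk
      exact vertex_bounds (hc k hk.1 hk.2) (hf k (by simp [Finset.mem_Icc, hk.1, hk.2]))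
    have hbz := vertex_bounds hcn hz
    have hcardn : (Fintype.card (Fin n)) = n := Fintype.card_fin n
    have expand : ∀ T : Finset (Fin n),
        ∑ i ∈ T, ((∑ k ∈ Finset.Icc 1 (n-1), f k) + z) i
          = (∑ k ∈ Finset.Icc 1 (n-1), ∑ i ∈ T, f k i) + ∑ i ∈ T, z i := by
      intro T
      have : ∀ i, ((∑ k ∈ Finset.Icc 1 (n-1), f k) + z) i
          = (∑ k ∈ Finset.Icc 1 (n-1), f k i) + z i := by
        intro i
        simp [Finset.sum_apply]
      rw [Finset.sum_congr rfl (fun i _ => this i), Finset.sum_add_distrib]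
      congr 1
      rw [Finset.sum_comm]
    apply rado n hn (fun k => (lam (k+1) : ℝ))
    · intro T
      have hTcard : T.card ≤ n := by
        have := Finset.card_le_univ T
        omega
      rw [expand T, ident n hn (fun k => (lam k : ℝ)) T.card hTcard]
      have hminT : min (n:ℝ) (T.card:ℝ) = (T.card:ℝ) := by
        apply min_eq_right; exact_mod_cast hTcard
      apply add_le_add
      · apply Finset.sum_le_sum
        intro k hk
        exact (hb k hk).1 T
      · have := hbz.1 T
        rwa [hminT] at this
    · rw [expand Finset.univ, ident n hn (fun k => (lam k : ℝ)) n le_rfl]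
      congr 1
      · apply Finset.sum_congr rfl
        intro k hk
        simp only [Finset.mem_Icc] at hk
        rw [(hb k (by simp [Finset.mem_Icc, hk.1, hk.2])).2]
        have : min (k:ℝ) (n:ℝ) = (k:ℝ) := by
          apply min_eq_left; exact_mod_cast (by omega : k ≤ n)
        rw [this]
      · rw [hbz.2]
end

section
/- The Rothe diagram D(w) of a permutation w ∈ Sₙ is column-convex if and only if w avoids the patterns 3142 and 4132. -/
/-- The Rothe diagram of `w`: boxes `(i,j)` with `w(i) > j` and `w⁻¹(j) > i`. -/
def RotheDiagram {n : ℕ} (w : Equiv.Perm (Fin n)) : Set (Fin n × Fin n) :=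
  {p | p.2 < w p.1 ∧ p.1 < w⁻¹ p.2}

/-- A diagram is column-convex if each column is an interval. -/
def ColumnConvex {n : ℕ} (D : Set (Fin n × Fin n)) : Prop :=
  ∀ j i₁ i₂ i₃ : Fin n, i₁ ≤ i₂ → i₂ ≤ i₃ → (i₁, j) ∈ D → (i₃, j) ∈ D → (i₂, j) ∈ D

/-- `w` contains the pattern `p` (a sequence of 4 values in relative order `p`). -/
def ContainsPattern {n : ℕ} (w : Equiv.Perm (Fin n)) (p : Fin 4 → Fin 4) : Prop :=
  ∃ f : Fin 4 → Fin n, StrictMono f ∧ ∀ a b : Fin 4, p a < p b ↔ w (f a) < w (f b)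

/-- `D(w)` is column-convex iff `w` avoids the patterns `3142` and `4132`. -/
theorem stmt10 {n : ℕ} (w : Equiv.Perm (Fin n)) :
    ColumnConvex (RotheDiagram w) ↔
      ¬ ContainsPattern w ![2, 0, 3, 1] ∧ ¬ ContainsPattern w ![3, 0, 2, 1] := by
  constructor
  · intro hcc
    constructor <;> rintro ⟨f, hf, hp⟩ <;>
    · have h30 : w (f 3) < w (f 0) := (hp 3 0).mp (by decide)
      have h32 : w (f 3) < w (f 2) := (hp 3 2).mp (by decide)
      have h13 : w (f 1) < w (f 3) := (hp 1 3).mp (by decide)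
      have hmem := hcc (w (f 3)) (f 0) (f 1) (f 2)
        (le_of_lt (hf (by decide))) (le_of_lt (hf (by decide)))
        ⟨h30, by rw [show ∀ x, w⁻¹ (w x) = x from w.symm_apply_apply]; exact hf (by decide)⟩
        ⟨h32, by rw [show ∀ x, w⁻¹ (w x) = x from w.symm_apply_apply]; exact hf (by decide)⟩
      exact absurd hmem.1 (not_lt.mpr h13.le)
  · rintro ⟨h1, h2⟩ j i₁ i₂ i₃ h12 h23 hA hB
    by_contra hC
    obtain ⟨ha1, ha2⟩ := hA
    obtain ⟨hb1, hb2⟩ := hB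
    have h2k : i₂ < w⁻¹ j := lt_of_le_of_lt h23 hb2
    have hw2le : ¬ j < w i₂ := fun h => hC ⟨h, h2k⟩
    have hne2 : w i₂ ≠ j := by
      intro h
      have : i₂ = w⁻¹ j := by rw [← h, show ∀ x, w⁻¹ (w x) = x from w.symm_apply_apply]
      omega
    have hw2 : w i₂ < j := lt_of_le_of_ne (not_lt.mp hw2le) hne2
    have hi12 : i₁ < i₂ := lt_of_le_of_ne h12 (by rintro rfl; exact hC ⟨ha1, ha2⟩)
    have hi23 : i₂ < i₃ := lt_of_le_of_ne h23 (by rintro rfl; exact hC ⟨hb1, hb2⟩)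
    have hne13 : w i₁ ≠ w i₃ := fun h => by
      have := w.injective h; omega
    have hs : StrictMono ![i₁, i₂, i₃, w⁻¹ j] := by
      intro x y hxy
      fin_cases x <;> fin_cases y <;>
        simp_all <;> omega
    have hv1 : j < w i₁ := ha1
    have hv3 : j < w i₃ := hb1
    have hk1 : i₁ < w⁻¹ j := ha2
    rcases lt_or_gt_of_ne hne13 with hlt | hgt
    · refine h1 ⟨![i₁, i₂, i₃, w⁻¹ j], hs, fun a b => ?_⟩
      fin_cases a <;> fin_cases b <;>
        simp [show ∀ x, w (w⁻¹ x) = x from w.apply_symm_apply] <;> omega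
    · refine h2 ⟨![i₁, i₂, i₃, w⁻¹ j], hs, fun a b => ?_⟩
      fin_cases a <;> fin_cases b <;>
        simp [show ∀ x, w (w⁻¹ x) = x from w.apply_symm_apply] <;> omega
end

section
/- Let λ⁽¹⁾,...,λ⁽ⁿ⁾ be partitions where λ⁽ⁱ⁾ has i (possibly zero) parts, embedded in ℝ^{n(n+1)/2} via y_{ij} ↦ x_{i,j+n-k} for GT(λ⁽ᵏ⁾). Then every point of the Minkowski sum P = GT(λ⁽¹⁾) + ··· + GT(λ⁽ⁿ⁾) satisfies: for all positive integers k and all sequences 0 ≤ iₖ < i_{k-1} < ··· < i₁ < j₁ < j₂ < ··· < jₖ ≤ n, the inequality Σ_{s=1}^{k} x_{jₛ-iₛ,jₛ} − Σ_{s=1}^{k-1} x_{j_{s+1}-iₛ,j_{s+1}} ≥ Σ_{s=0}^{iₖ} λ⁽ⁿ⁻ˢ⁾_{j₁−s}. -/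
open Pointwise

/-- The embedding of a size-`k` triangular array into a size-`n` one, via
`y_{ij} ↦ x_{i,j+n-k}`. -/
def embedGT (n k : ℕ) (y : ℕ → ℕ → ℝ) : ℕ → ℕ → ℝ :=
  fun i j => y i (j - (n - k))

lemma mem_sum_sets {α : Type*} [AddCommMonoid α] [DecidableEq ℕ] (s : Finset ℕ) (S : ℕ → Set α) :
    ∀ x ∈ ∑ k ∈ s, S k, ∃ g : ℕ → α, (∀ k ∈ s, g k ∈ S k) ∧ x = ∑ k ∈ s, g k := by
  classical
  induction s using Finset.induction_on with
  | empty => intro x hx; exact ⟨fun _ => 0, by simp, by simpa using hx⟩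
  | insert _ _ hns ih =>
      rename_i a s
      intro x hx
      rw [Finset.sum_insert hns] at hx
      obtain ⟨u, hu, v, hv, huv⟩ := Set.mem_add.mp hx
      obtain ⟨g, hg, rfl⟩ := ih v hv
      refine ⟨Function.update g a u, ?_, ?_⟩
      · intro k hk
        rcases Finset.mem_insert.mp hk with h | h
        · subst h; simpa using hu
        · have hka : k ≠ a := fun he => hns (he ▸ h)
          rw [Function.update_of_ne hka]
          exact hg k h
      · rw [Finset.sum_insert hns, Function.update_self, ← huv]
        congr 1
        apply Finset.sum_congr rfl
        intro k hk
        have hka : k ≠ a := fun he => hns (he ▸ hk)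
        rw [Function.update_of_ne hka]

lemma sum_shift (f : ℕ → ℝ) (K : ℕ) (hK : 1 ≤ K) :
    ∑ s ∈ Finset.Icc 1 K, f s = f 1 + ∑ s ∈ Finset.Icc 1 (K-1), f (s+1) := by
  have h1 : Finset.Icc 1 K = insert 1 (Finset.Icc 2 K) := by
    ext t; simp only [Finset.mem_Icc, Finset.mem_insert]; omega
  have h2 : ∑ s ∈ Finset.Icc 1 (K-1), f (s+1) = ∑ s ∈ Finset.Icc 2 K, f s := by
    refine Finset.sum_nbij' (i := fun s => s + 1) (j := fun s => s - 1)
      ?_ ?_ ?_ ?_ ?_ <;> intro a ha <;> simp only [Finset.mem_Icc] at ha ⊢ <;>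
      first | rfl | omega
  rw [h1, Finset.sum_insert (by simp), h2]

lemma GT_col_mono {k : ℕ} {mu : ℕ → ℝ} {y : ℕ → ℕ → ℝ} (hy : y ∈ GTpoly k mu)
    {i' i j : ℕ} (h1 : 1 ≤ i') (h2 : i' ≤ i) (h3 : i ≤ j) (h4 : j ≤ k) :
    y i' j ≤ y i j := by
  obtain ⟨-, -, -, hgt⟩ := hy
  revert h3
  induction i, h2 using Nat.le_induction with
  | base => intro _; exact le_rfl
  | succ m hm ih =>
      intro h3
      have h := (hgt (m+1) j (by omega) h3 h4).2
      simp only [Nat.add_sub_cancel] at h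
      exact le_trans (ih (by omega)) h

lemma GT_diag_mono {k : ℕ} {mu : ℕ → ℝ} {y : ℕ → ℕ → ℝ} (hy : y ∈ GTpoly k mu)
    {i j : ℕ} (h1 : 1 ≤ i) (h2 : i ≤ j) :
    ∀ m, j + m ≤ k → y (i+m) (j+m) ≤ y i j := by
  obtain ⟨-, -, -, hgt⟩ := hy
  intro m
  induction m with
  | zero => intro _; simp
  | succ m ih =>
      intro hm
      have h := (hgt (i+m+1) (j+m+1) (by omega) (by omega) (by omega)).1
      simp only [Nat.add_sub_cancel] at h
      exact le_trans h (ih (by omega))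

lemma seq_mono {K : ℕ} {ii jj : ℕ → ℕ}
    (hii : ∀ s, 1 ≤ s → s < K → ii (s+1) < ii s)
    (hjj : ∀ s, 1 ≤ s → s < K → jj s < jj (s+1)) :
    ∀ s t, 1 ≤ s → s ≤ t → t ≤ K → ii t ≤ ii s ∧ jj s ≤ jj t := by
  intro s t hs hst
  induction t, hst using Nat.le_induction with
  | base => intro _; exact ⟨le_rfl, le_rfl⟩
  | succ m hm ih =>
      intro h
      obtain ⟨ha, hb⟩ := ih (by omega)
      exact ⟨le_trans (le_of_lt (hii m (by omega) (by omega))) ha,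
             le_trans hb (le_of_lt (hjj m (by omega) (by omega)))⟩

lemma single_ineq (n k : ℕ) (hk1 : 1 ≤ k) (hkn : k ≤ n) (mu : ℕ → ℝ)
    (y : ℕ → ℕ → ℝ) (hy : y ∈ GTpoly k mu)
    (K : ℕ) (hK : 1 ≤ K) (ii jj : ℕ → ℕ)
    (hii : ∀ s, 1 ≤ s → s < K → ii (s+1) < ii s)
    (hjj : ∀ s, 1 ≤ s → s < K → jj s < jj (s+1))
    (h1 : ii 1 < jj 1) (hjn : jj K ≤ n) :
    (∑ s ∈ Finset.Icc 1 K, embedGT n k y (jj s - ii s) (jj s)) -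
        (∑ s ∈ Finset.Icc 1 (K-1), embedGT n k y (jj (s+1) - ii s) (jj (s+1))) ≥
      (if n - k ≤ ii K then mu (jj 1 - (n - k)) else 0) := by
  set d := n - k with hd
  have hemb : ∀ i j, embedGT n k y i j = y i (j - d) := by
    intro i j; simp [embedGT, hd]
  simp only [hemb]
  have hmono := seq_mono hii hjj
  have hiijj : ∀ s, 1 ≤ s → s ≤ K → ii s < jj s := by
    intro s hs hsK
    have ha := (hmono 1 s le_rfl hs hsK).1
    have hb := (hmono 1 s le_rfl hs hsK).2
    omega
  have hjjn : ∀ s, 1 ≤ s → s ≤ K → jj s ≤ n := by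
    intro s hs hsK
    have := (hmono s K hs hsK le_rfl).2
    omega
  have hz : ∀ v q : ℕ, v < d → v < q → y (q - v) (q - d) = 0 := by
    intro v q hvd hvq
    exact hy.1 _ _ (by omega)
  have hbracketB : ∀ s, 1 ≤ s → s + 1 ≤ K → d ≤ ii s →
      y (jj (s+1) - ii s) (jj (s+1) - d) ≤ y (jj s - ii s) (jj s - d) := by
    intro s hs hsK hds
    have hisjs : ii s < jj s := hiijj s hs (by omega)
    have hjm : jj s < jj (s+1) := hjj s hs (by omega)
    have hn1 : jj (s+1) ≤ n := hjjn (s+1) (by omega) hsK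
    have hdm := GT_diag_mono hy (i := jj s - ii s) (j := jj s - d)
      (by omega) (by omega) (jj (s+1) - jj s) (by omega)
    have e1 : jj s - ii s + (jj (s+1) - jj s) = jj (s+1) - ii s := by omega
    have e2 : jj s - d + (jj (s+1) - jj s) = jj (s+1) - d := by omega
    rwa [e1, e2] at hdm
  by_cases hcase : d ≤ ii K
  · rw [if_pos hcase]
    rw [sum_shift (fun s => y (jj s - ii s) (jj s - d)) K hK]
    have hsum : ∑ s ∈ Finset.Icc 1 (K-1), y (jj (s+1) - ii s) (jj (s+1) - d)
        ≤ ∑ s ∈ Finset.Icc 1 (K-1), y (jj (s+1) - ii (s+1)) (jj (s+1) - d) := by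
      apply Finset.sum_le_sum
      intro s hs
      simp only [Finset.mem_Icc] at hs
      have hdis : d ≤ ii (s+1) :=
        le_trans hcase ((hmono (s+1) K (by omega) (by omega) le_rfl).1)
      have h2 : ii (s+1) < ii s := hii s hs.1 (by omega)
      have h3 : ii s < jj s := hiijj s hs.1 (by omega)
      have h4 : jj s < jj (s+1) := hjj s hs.1 (by omega)
      have h5 : jj (s+1) ≤ n := hjjn (s+1) (by omega) (by omega)
      exact GT_col_mono hy (by omega) (by omega) (by omega) (by omega)
    have hfirst : mu (jj 1 - d) ≤ y (jj 1 - ii 1) (jj 1 - d) := by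
      have hiK : d ≤ ii 1 := le_trans hcase (hmono 1 K le_rfl hK le_rfl).1
      have hj1 : jj 1 ≤ n := hjjn 1 le_rfl hK
      have hcol := GT_col_mono hy (i' := 1) (i := jj 1 - ii 1) (j := jj 1 - d)
        le_rfl (by omega) (by omega) (by omega)
      have htop : y 1 (jj 1 - d) = mu (jj 1 - d) := hy.2.2.1 _ (by omega) (by omega)
      rwa [htop] at hcol
    linarith
  · rw [if_neg hcase]
    push_neg at hcase
    obtain ⟨K', rfl⟩ : ∃ K', K = K' + 1 := ⟨K - 1, by omega⟩
    rw [Finset.sum_Icc_succ_top (by omega : 1 ≤ K' + 1)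
      (fun s => y (jj s - ii s) (jj s - d))]
    simp only [Nat.add_sub_cancel]
    have haK : y (jj (K'+1) - ii (K'+1)) (jj (K'+1) - d) = 0 :=
      hz (ii (K'+1)) (jj (K'+1)) hcase (hiijj (K'+1) (by omega) le_rfl)
    have hsum : ∑ s ∈ Finset.Icc 1 K', y (jj (s+1) - ii s) (jj (s+1) - d)
        ≤ ∑ s ∈ Finset.Icc 1 K', y (jj s - ii s) (jj s - d) := by
      apply Finset.sum_le_sum
      intro s hs
      simp only [Finset.mem_Icc] at hs
      by_cases hds : d ≤ ii s
      · exact hbracketB s hs.1 (by omega) hds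
      · push_neg at hds
        have h3 : ii s < jj s := hiijj s hs.1 (by omega)
        have h4 : jj s < jj (s+1) := hjj s hs.1 (by omega)
        rw [hz (ii s) (jj s) hds h3, hz (ii s) (jj (s+1)) hds (by omega)]
    linarith

/-- Every point of the Minkowski sum `GT(λ⁽¹⁾) + ⋯ + GT(λ⁽ⁿ⁾)` satisfies, for each `K ≥ 1`
and each sequence `0 ≤ i_K < ⋯ < i₁ < j₁ < ⋯ < j_K ≤ n`, the inequality
`∑_s x_{j_s-i_s,j_s} − ∑_s x_{j_{s+1}-i_s,j_{s+1}} ≥ ∑_{s=0}^{i_K} λ⁽ⁿ⁻ˢ⁾_{j₁−s}`. -/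
theorem stmt11 (n : ℕ) (hn : 1 ≤ n) (lam : ℕ → ℕ → ℤ)
    (hnn : ∀ k r, 0 ≤ lam k r)
    (hdec : ∀ k, 1 ≤ k → k ≤ n → ∀ r, 1 ≤ r → r < k → lam k (r+1) ≤ lam k r)
    (hout : ∀ k r, r = 0 ∨ k < r → lam k r = 0) :
    ∀ x ∈ ∑ k ∈ Finset.Icc 1 n, (embedGT n k) '' GTpoly k (fun r => (lam k r : ℝ)),
      ∀ K : ℕ, 1 ≤ K → ∀ ii jj : ℕ → ℕ,
        (∀ s, 1 ≤ s → s < K → ii (s+1) < ii s) →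
        (∀ s, 1 ≤ s → s < K → jj s < jj (s+1)) →
        ii 1 < jj 1 → jj K ≤ n →
        (∑ s ∈ Finset.Icc 1 K, x (jj s - ii s) (jj s)) -
            (∑ s ∈ Finset.Icc 1 (K-1), x (jj (s+1) - ii s) (jj (s+1))) ≥
          ∑ s ∈ Finset.Icc 0 (ii K), ((lam (n - s) (jj 1 - s) : ℤ) : ℝ) := by
  intro x hx K hK ii jj hii hjj h1 hjn
  obtain ⟨g, hg, rfl⟩ := mem_sum_sets _ _ x hx
  have key : ∀ k ∈ Finset.Icc 1 n,
      (if n - k ≤ ii K then ((lam k (jj 1 - (n - k)) : ℤ) : ℝ) else 0) ≤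
      (∑ s ∈ Finset.Icc 1 K, g k (jj s - ii s) (jj s)) -
        (∑ s ∈ Finset.Icc 1 (K-1), g k (jj (s+1) - ii s) (jj (s+1))) := by
    intro k hk
    obtain ⟨y, hy, hgy⟩ := hg k hk
    simp only [Finset.mem_Icc] at hk
    rw [← hgy]
    exact single_ineq n k hk.1 hk.2 _ y hy K hK ii jj hii hjj h1 hjn
  have hL : (∑ s ∈ Finset.Icc 1 K, (∑ k ∈ Finset.Icc 1 n, g k) (jj s - ii s) (jj s)) -
      (∑ s ∈ Finset.Icc 1 (K-1), (∑ k ∈ Finset.Icc 1 n, g k) (jj (s+1) - ii s) (jj (s+1)))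
      = ∑ k ∈ Finset.Icc 1 n, ((∑ s ∈ Finset.Icc 1 K, g k (jj s - ii s) (jj s)) -
        (∑ s ∈ Finset.Icc 1 (K-1), g k (jj (s+1) - ii s) (jj (s+1)))) := by
    simp only [Finset.sum_apply]
    rw [Finset.sum_sub_distrib]
    congr 1 <;> exact Finset.sum_comm
  have hmono := seq_mono hii hjj 1 K le_rfl hK le_rfl
  have hiiKn : ii K < n := by
    have := hmono.1; have := hmono.2; omega
  have hR : ∑ k ∈ Finset.Icc 1 n, (if n - k ≤ ii K then ((lam k (jj 1 - (n - k)) : ℤ) : ℝ) else 0)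
      = ∑ s ∈ Finset.Icc 0 (ii K), ((lam (n - s) (jj 1 - s) : ℤ) : ℝ) := by
    rw [← Finset.sum_filter]
    refine Finset.sum_nbij' (i := fun k => n - k) (j := fun s => n - s)
      ?_ ?_ ?_ ?_ ?_ <;> intro a ha <;>
      simp only [Finset.mem_Icc, Finset.mem_filter] at ha ⊢
    · omega
    · omega
    · omega
    · omega
    · have e : n - (n - a) = a := by omega
      rw [e]
  rw [hL, ← hR]
  exact Finset.sum_le_sum key
end

section
/- Let λ⁽¹⁾,...,λ⁽ⁿ⁾ be partitions where λ⁽ⁱ⁾ has i parts, embedded as above. Then every point (x_{ij}) of the Minkowski sum GT(λ⁽¹⁾) + ··· + GT(λ⁽ⁿ⁾) satisfies x_{i-1,j-1} ≥ x_{ij} for all 1 ≤ i ≤ j ≤ n, and the equality x_{1,j} = Σ_{s=0}^{j-1} λ⁽ⁿ⁻ˢ⁾_{j-s} for all 1 ≤ j ≤ n. -/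
open Pointwise

lemma GT_key {k : ℕ} {lam : ℕ → ℝ} {y : ℕ → ℕ → ℝ} (hy : y ∈ GTpoly k lam)
    (a b : ℕ) (ha : 2 ≤ a) : y (a-1) (b-1) ≥ y a b := by
  obtain ⟨hz, hnn, -, hin⟩ := hy
  by_cases h : 1 ≤ a ∧ a ≤ b ∧ b ≤ k
  · exact (hin a b ha h.2.1 h.2.2).1
  · rw [hz a b h]
    by_cases h2 : 1 ≤ a - 1 ∧ a - 1 ≤ b - 1 ∧ b - 1 ≤ k
    · exact hnn _ _ h2.1 h2.2.1 h2.2.2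
    · rw [hz _ _ h2]

/-- Every point of the Minkowski sum `GT(λ⁽¹⁾) + ⋯ + GT(λ⁽ⁿ⁾)` satisfies
`x_{i-1,j-1} ≥ x_{ij}` for all `1 ≤ i ≤ j ≤ n` (read where defined) and the equalities
`x_{1j} = ∑_{s=0}^{j-1} λ⁽ⁿ⁻ˢ⁾_{j-s}` for `1 ≤ j ≤ n`. -/
theorem stmt12 (n : ℕ) (hn : 1 ≤ n) (lam : ℕ → ℕ → ℤ)
    (hnn : ∀ k r, 0 ≤ lam k r)
    (hdec : ∀ k, 1 ≤ k → k ≤ n → ∀ r, 1 ≤ r → r < k → lam k (r+1) ≤ lam k r)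
    (hout : ∀ k r, r = 0 ∨ k < r → lam k r = 0) :
    ∀ x ∈ ∑ k ∈ Finset.Icc 1 n, (embedGT n k) '' GTpoly k (fun r => (lam k r : ℝ)),
      (∀ i j, 2 ≤ i → i ≤ j → j ≤ n → x (i-1) (j-1) ≥ x i j) ∧
      (∀ j, 1 ≤ j → j ≤ n →
        x 1 j = ∑ s ∈ Finset.Icc 0 (j-1), ((lam (n - s) (j - s) : ℤ) : ℝ)) := by
  intro x hx
  rw [Set.mem_finset_sum] at hx
  obtain ⟨g, hg, rfl⟩ := hx
  have hgy : ∀ k ∈ Finset.Icc 1 n, ∃ y ∈ GTpoly k (fun r => (lam k r : ℝ)),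
      g k = embedGT n k y := by
    intro k hk
    obtain ⟨y, hy, h⟩ := hg hk
    exact ⟨y, hy, h.symm⟩
  constructor
  · intro i j hi hij hjn
    simp only [Finset.sum_apply]
    apply Finset.sum_le_sum
    intro k hk
    obtain ⟨y, hy, hgk⟩ := hgy k hk
    rw [hgk]
    show y i (j - (n-k)) ≤ y (i-1) ((j-1) - (n-k))
    have : (j-1) - (n-k) = (j - (n-k)) - 1 := by omega
    rw [this]
    exact GT_key hy i (j - (n-k)) hi
  · intro j hj hjn
    simp only [Finset.sum_apply]
    have hterm : ∀ k ∈ Finset.Icc 1 n, g k 1 j = ((lam k (j - (n - k)) : ℤ) : ℝ) := by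
      intro k hk
      obtain ⟨y, hy, hgk⟩ := hgy k hk
      obtain ⟨hz, -, heq, -⟩ := hy
      rw [hgk]
      show y 1 (j - (n-k)) = _
      by_cases hb : 1 ≤ j - (n - k)
      · exact heq _ hb (by simp at hk; omega)
      · rw [hz 1 (j - (n-k)) (by omega), hout k (j - (n-k)) (Or.inl (by omega))]
        simp
    rw [Finset.sum_congr rfl hterm]
    rw [show Finset.Icc 1 n = Finset.Icc 1 (n-j) ∪ Finset.Icc (n-j+1) n by
      ext a; simp only [Finset.mem_union, Finset.mem_Icc]; omega]
    rw [Finset.sum_union (by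
      rw [Finset.disjoint_left]; intro a ha hb; simp at ha hb; omega)]
    have h0 : ∑ k ∈ Finset.Icc 1 (n-j), ((lam k (j - (n - k)) : ℤ) : ℝ) = 0 := by
      apply Finset.sum_eq_zero
      intro k hk
      simp only [Finset.mem_Icc] at hk
      rw [hout k (j - (n-k)) (Or.inl (by omega))]
      simp
    rw [h0, zero_add]
    apply Finset.sum_nbij' (fun k => n - k) (fun s => n - s)
    · intro a ha; simp only [Finset.mem_Icc] at *; omega
    · intro a ha; simp only [Finset.mem_Icc] at *; omega
    · intro a ha; simp only [Finset.mem_Icc] at ha; omega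
    · intro a ha; simp only [Finset.mem_Icc] at ha; omega
    · intro k hk
      simp only [Finset.mem_Icc] at hk
      congr 2 <;> omega
end

section
/- Let n=3 and let λ⁽³⁾ = (a+b, a, 0), λ⁽²⁾ = (c, 0), λ⁽¹⁾ = (0) for nonnegative reals a, b, c. Then the Minkowski sum GT(λ⁽¹⁾) + GT(λ⁽²⁾) + GT(λ⁽³⁾) (with the standard embedding) equals the set of triangular arrays (x_{ij})_{1≤i≤j≤3} with x₁₁ = a+b, x₁₂ = a+c, x₁₃ = 0, satisfying x₁₁ ≥ x₂₂ ≥ x₃₃ ≥ 0, x₁₂ ≥ x₂₃ ≥ 0, x₂₂ ≥ a, x₂₃ ≤ c + min(a, x₃₃). -/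
open Pointwise

/-- Example with `n = 3`, `λ⁽³⁾ = (a+b, a, 0)`, `λ⁽²⁾ = (c, 0)`, `λ⁽¹⁾ = (0)`:
the Minkowski sum `GT(λ⁽¹⁾) + GT(λ⁽²⁾) + GT(λ⁽³⁾)` is the set of triangular arrays with
`x₁₁ = a+b`, `x₁₂ = a+c`, `x₁₃ = 0`, `x₁₁ ≥ x₂₂ ≥ x₃₃ ≥ 0`, `x₁₂ ≥ x₂₃ ≥ 0`, `x₂₂ ≥ a`
and `x₂₃ ≤ c + min a x₃₃`. -/
theorem stmt14 (a b c : ℝ) (ha : 0 ≤ a) (hb : 0 ≤ b) (hc : 0 ≤ c) :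
    (embedGT 3 1 '' GTpoly 1 (fun _ => (0 : ℝ))) +
      (embedGT 3 2 '' GTpoly 2 (fun r => if r = 1 then c else 0)) +
      (embedGT 3 3 '' GTpoly 3 (fun r => if r = 1 then a + b else if r = 2 then a else 0)) =
    {x : ℕ → ℕ → ℝ |
      (∀ i j, ¬(1 ≤ i ∧ i ≤ j ∧ j ≤ 3) → x i j = 0) ∧
      x 1 1 = a + b ∧ x 1 2 = a + c ∧ x 1 3 = 0 ∧
      x 1 1 ≥ x 2 2 ∧ x 2 2 ≥ x 3 3 ∧ x 3 3 ≥ 0 ∧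
      x 1 2 ≥ x 2 3 ∧ x 2 3 ≥ 0 ∧
      a ≤ x 2 2 ∧ x 2 3 ≤ c + min a (x 3 3)} := by
  ext x
  simp only [Set.mem_add, Set.mem_image, Set.mem_setOf_eq]
  constructor
  · rintro ⟨u, ⟨v1, ⟨y1, hy1, rfl⟩, v2, ⟨y2, hy2, rfl⟩, rfl⟩, v3, ⟨y3, hy3, rfl⟩, rfl⟩
    obtain ⟨h10, h1p, h1t, h1g⟩ := hy1
    obtain ⟨h20, h2p, h2t, h2g⟩ := hy2
    obtain ⟨h30, h3p, h3t, h3g⟩ := hy3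
    have key : ∀ i j, (embedGT 3 1 y1 + embedGT 3 2 y2 + embedGT 3 3 y3) i j
        = y1 i (j - 2) + y2 i (j - 1) + y3 i j := by
      intro i j; simp [embedGT]
    -- values of y1
    have e11 : y1 1 1 = 0 := by simpa using h1t 1 le_rfl le_rfl
    -- values of y2
    have f11 : y2 1 1 = c := by simpa using h2t 1 le_rfl (by norm_num)
    have f12 : y2 1 2 = 0 := by simpa using h2t 2 (by norm_num) le_rfl
    have f22 : y2 1 1 ≥ y2 2 2 ∧ y2 2 2 ≥ y2 1 2 := by
      simpa using h2g 2 2 le_rfl le_rfl le_rfl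
    -- values of y3
    have g11 : y3 1 1 = a + b := by simpa using h3t 1 le_rfl (by norm_num)
    have g12 : y3 1 2 = a := by simpa using h3t 2 (by norm_num) (by norm_num)
    have g13 : y3 1 3 = 0 := by simpa using h3t 3 (by norm_num) le_rfl
    have g22 : y3 1 1 ≥ y3 2 2 ∧ y3 2 2 ≥ y3 1 2 := by
      simpa using h3g 2 2 le_rfl le_rfl (by norm_num)
    have g23 : y3 1 2 ≥ y3 2 3 ∧ y3 2 3 ≥ y3 1 3 := by
      simpa using h3g 2 3 le_rfl (by norm_num) le_rfl
    have g33 : y3 2 2 ≥ y3 3 3 ∧ y3 3 3 ≥ y3 2 3 := by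
      simpa using h3g 3 3 (by norm_num) le_rfl le_rfl
    refine ⟨?_, ?_, ?_, ?_, ?_, ?_, ?_, ?_, ?_, ?_, ?_⟩
    · intro i j h
      rw [key]
      rw [h10 i (j-2) (by omega), h20 i (j-1) (by omega), h30 i j (by omega)]
      ring
    · rw [key]
      rw [h10 1 0 (by omega), h20 1 0 (by omega), g11]; ring
    · rw [key]
      rw [h10 1 0 (by omega), f11, g12]; ring
    · rw [key]
      rw [e11, f12, g13]; ring
    · rw [key, key]
      rw [h10 1 0 (by omega), h20 1 0 (by omega), g11,
          h10 2 0 (by omega), h20 2 1 (by omega)]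
      linarith [g22.1]
    · rw [key, key]
      rw [h10 2 0 (by omega), h20 2 1 (by omega), h10 3 1 (by omega),
          h20 3 2 (by omega)]
      linarith [g33.1]
    · rw [key]
      rw [h10 3 1 (by omega), h20 3 2 (by omega)]
      have := h3p 3 3 (by norm_num) le_rfl (by norm_num)
      linarith
    · rw [key, key]
      rw [h10 1 0 (by omega), f11, g12, h10 2 1 (by omega)]
      have : y2 2 2 ≤ c := by linarith [f22.1]
      linarith [g23.1]
    · rw [key]
      rw [h10 2 1 (by omega)]
      have h1 := h2p 2 2 (by norm_num) le_rfl le_rfl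
      have h2 := h3p 2 3 (by norm_num) (by norm_num) le_rfl
      linarith
    · rw [key]
      rw [h10 2 0 (by omega), h20 2 1 (by omega)]
      linarith [g22.2, g12]
    · rw [key, key]
      rw [h10 2 1 (by omega), h10 3 1 (by omega), h20 3 2 (by omega)]
      have ht : y2 2 2 ≤ c := by linarith [f22.1]
      have h1 : y3 2 3 ≤ a := by linarith [g23.1]
      have h2 : y3 2 3 ≤ y3 3 3 := g33.2
      rw [← min_add_add_left, le_min_iff]
      norm_num
      constructor <;> linarith
  · rintro ⟨h0, h11, h12, h13, h22le, h33le, h33ge, h23le, h23ge, h22ge, hmin⟩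
    set t : ℝ := min (x 2 3) c with htdef
    set s : ℝ := x 2 3 - t with hsdef
    have hts : 0 ≤ t := le_min h23ge hc
    have htc : t ≤ c := min_le_right _ _
    have hs0 : 0 ≤ s := by
      have := min_le_left (x 2 3) c
      rw [hsdef]; linarith
    have hsmin : s ≤ min a (x 3 3) := by
      rcases le_total (x 2 3) c with h | h
      · have ht' : t = x 2 3 := min_eq_left h
        rw [hsdef, ht']
        simpa using le_min ha h33ge
      · have ht' : t = c := min_eq_right h
        rw [hsdef, ht']
        linarith
    have hsa : s ≤ a := le_trans hsmin (min_le_left _ _)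
    have hs33 : s ≤ x 3 3 := le_trans hsmin (min_le_right _ _)
    have m1 : (fun (_ _ : ℕ) => (0:ℝ)) ∈ GTpoly 1 (fun _ => (0 : ℝ)) := by
      refine ⟨fun i j _ => rfl, fun i j _ _ _ => le_rfl, fun j _ _ => rfl, ?_⟩
      intro i j h2 hij hj; omega
    have m2 : (fun i j => if i = 1 ∧ j = 1 then c else if i = 2 ∧ j = 2 then t else 0 :
        ℕ → ℕ → ℝ) ∈ GTpoly 2 (fun r => if r = 1 then c else 0) := by
      refine ⟨?_, ?_, ?_, ?_⟩
      · intro i j h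
        dsimp only
        split_ifs with e1 e2
        · exact absurd (by omega) h
        · exact absurd (by omega) h
        · rfl
      · intro i j _ _ _
        dsimp only
        split_ifs
        · exact hc
        · exact hts
        · exact le_rfl
      · intro j h1 h2; interval_cases j <;> norm_num
      · intro i j h2 hij hj
        have hi2 : i ≤ 2 := le_trans hij hj
        interval_cases i <;> interval_cases j
        norm_num
        exact ⟨htc, hts⟩
    have m3 : (fun i j => if i = 1 ∧ j = 1 then a + b else if i = 1 ∧ j = 2 then a
        else if i = 2 ∧ j = 2 then x 2 2 else if i = 2 ∧ j = 3 then s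
        else if i = 3 ∧ j = 3 then x 3 3 else 0 : ℕ → ℕ → ℝ) ∈
        GTpoly 3 (fun r => if r = 1 then a + b else if r = 2 then a else 0) := by
      refine ⟨?_, ?_, ?_, ?_⟩
      · intro i j h
        dsimp only
        split_ifs with e1 e2 e3 e4 e5
        · exact absurd (by omega) h
        · exact absurd (by omega) h
        · exact absurd (by omega) h
        · exact absurd (by omega) h
        · exact absurd (by omega) h
        · rfl
      · intro i j _ _ _
        dsimp only
        split_ifs
        · linarith
        · exact ha
        · linarith
        · exact hs0
        · exact h33ge
        · exact le_rfl
      · intro j h1 h2; interval_cases j <;> norm_num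
      · intro i j h2 hij hj
        have hi3 : i ≤ 3 := le_trans hij hj
        interval_cases i <;> interval_cases j <;> norm_num
        · exact ⟨by linarith, h22ge⟩
        · exact ⟨hsa, hs0⟩
        · exact ⟨h33le, hs33⟩
    refine ⟨_, ⟨_, ⟨_, m1, rfl⟩, _, ⟨_, m2, rfl⟩, rfl⟩, _, ⟨_, m3, rfl⟩, ?_⟩
    funext i j
    simp only [Pi.add_apply, embedGT]
    norm_num
    by_cases hr : 1 ≤ i ∧ i ≤ j ∧ j ≤ 3
    · obtain ⟨hi1, hij, hj3⟩ := hr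
      have hi3 : i ≤ 3 := le_trans hij hj3
      interval_cases i <;> interval_cases j <;> norm_num <;> linarith
    · rw [h0 i j hr]
      have r1 : ¬(i = 1 ∧ j = 2) := by omega
      have r2 : ¬(i = 2 ∧ j = 3) := by omega
      have r3 : ¬(i = 1 ∧ j = 1) ∧ ¬(i = 1 ∧ j = 2) ∧ ¬(i = 2 ∧ j = 2) ∧
          ¬(i = 2 ∧ j = 3) ∧ ¬(i = 3 ∧ j = 3) := ⟨by omega, by omega, by omega, by omega, by omega⟩
      rw [if_neg r1, if_neg r2, if_neg r3.1, if_neg r3.2.1, if_neg r3.2.2.1,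
          if_neg r3.2.2.2.1, if_neg r3.2.2.2.2]
      ring
end

section
/- The image of the Gelfand-Tsetlin polytope GT(λ) under the weight map wt equals the permutahedron P_λ = Conv(Sₙ·λ). -/
namespace StmtAux

def permPts (n : ℕ) (lam : ℕ → ℝ) : Set (ℕ → ℝ) :=
  {y : ℕ → ℝ | ∃ σ : Equiv.Perm ℕ,
      (∀ m, ¬(1 ≤ m ∧ m ≤ n) → σ m = m) ∧
      (∀ m, y m = if 1 ≤ m ∧ m ≤ n then lam (σ m) else 0)}

def Pset (n : ℕ) (lam : ℕ → ℝ) : Set (ℕ → ℝ) := convexHull ℝ (permPts n lam)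

lemma Pset_convex (n : ℕ) (lam : ℕ → ℝ) : Convex ℝ (Pset n lam) :=
  convex_convexHull ℝ _

lemma perm_mem_iff {n : ℕ} {σ : Equiv.Perm ℕ}
    (hσ : ∀ m, ¬(1 ≤ m ∧ m ≤ n) → σ m = m) (m : ℕ) :
    (1 ≤ σ m ∧ σ m ≤ n) ↔ (1 ≤ m ∧ m ≤ n) := by
  constructor
  · intro h
    by_contra hm
    rw [hσ m hm] at h
    exact hm h
  · intro hm
    by_contra h
    have h2 := hσ (σ m) h
    have h3 : σ m = m := σ.injective h2
    rw [h3] at h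
    exact h hm

lemma mem_Pset_affine {n : ℕ} {lam : ℕ → ℝ} (G : (ℕ → ℝ) → (ℕ → ℝ))
    (hG : ∀ (a b : ℝ) (y z : ℕ → ℝ), a + b = 1 → G (a • y + b • z) = a • G y + b • G z)
    {s : Set (ℕ → ℝ)} (hs : ∀ y ∈ s, G y ∈ Pset n lam) :
    ∀ y ∈ convexHull ℝ s, G y ∈ Pset n lam := by
  have h2 : convexHull ℝ s ⊆ {y | G y ∈ Pset n lam} := by
    apply convexHull_min hs
    intro y hy z hz a b ha hb hab
    show G (a • y + b • z) ∈ Pset n lam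
    rw [hG a b y z hab]
    exact (convex_convexHull ℝ _) hy hz ha hb hab
  exact fun y hy => h2 hy

lemma Pset_comp_perm {n : ℕ} {lam : ℕ → ℝ} (τ : Equiv.Perm ℕ)
    (hτ : ∀ m, ¬(1 ≤ m ∧ m ≤ n) → τ m = m) {y : ℕ → ℝ} (hy : y ∈ Pset n lam) :
    (fun m => y (τ m)) ∈ Pset n lam := by
  apply mem_Pset_affine (fun z => (fun m => z (τ m)))
    (fun a b y z hab => by funext m; simp)
    (fun z hz => ?_) y hy
  obtain ⟨σ, hσ1, hσ2⟩ := hz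
  apply subset_convexHull
  refine ⟨τ.trans σ, fun m hm => ?_, fun m => ?_⟩
  · rw [Equiv.trans_apply, hτ m hm, hσ1 m hm]
  · simp only [Equiv.trans_apply]
    rw [hσ2 (τ m)]
    by_cases hm : 1 ≤ m ∧ m ≤ n
    · rw [if_pos ((perm_mem_iff hτ m).mpr hm), if_pos hm]
    · rw [if_neg (fun h => hm ((perm_mem_iff hτ m).mp h)), if_neg hm]

lemma Pset_extend (n : ℕ) (lam : ℕ → ℝ) {z : ℕ → ℝ} (hz : z ∈ Pset n lam) :
    Function.update z (n+1) (lam (n+1)) ∈ Pset (n+1) lam := by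
  apply mem_Pset_affine (fun z => Function.update z (n+1) (lam (n+1)))
    (fun a b y z hab => ?_) (fun z hz => ?_) z hz
  · funext m
    simp only [Pi.add_apply, Pi.smul_apply, Function.update_apply, smul_eq_mul]
    split_ifs with h
    · rw [← add_mul, hab, one_mul]
    · ring
  · obtain ⟨σ, hσ1, hσ2⟩ := hz
    apply subset_convexHull
    refine ⟨σ, fun m hm => hσ1 m (fun h => hm ⟨h.1, by omega⟩), fun m => ?_⟩
    simp only [Function.update_apply]
    by_cases hm : m = n + 1
    · subst hm
      rw [if_pos rfl, if_pos ⟨by omega, le_refl _⟩, hσ1 (n+1) (by omega)]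
    · rw [if_neg hm, hσ2 m]
      by_cases h2 : 1 ≤ m ∧ m ≤ n
      · rw [if_pos h2, if_pos ⟨h2.1, by omega⟩]
      · rw [if_neg h2, if_neg (by omega)]

lemma sum_shift (f : ℕ → ℝ) (a b : ℕ) :
    ∑ j ∈ Finset.Icc (a+1) (b+1), f (j-1) = ∑ j ∈ Finset.Icc a b, f j := by
  apply Finset.sum_bij' (fun j _ => j - 1) (fun j _ => j + 1)
  all_goals intros; simp_all [Finset.mem_Icc]; try omega


lemma Lmain : ∀ (n : ℕ), 1 ≤ n → ∀ (lam mu : ℕ → ℝ),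
    (∀ j, 2 ≤ j → j ≤ n → mu j ≤ lam (j-1) ∧ lam j ≤ mu j) →
    (fun m => if m = 1 then (∑ j ∈ Finset.Icc 1 n, lam j) - ∑ j ∈ Finset.Icc 2 n, mu j
      else if 2 ≤ m ∧ m ≤ n then mu m else 0) ∈ Pset n lam := by
  intro n
  induction n with
  | zero => omega
  | succ n ih =>
    intro _ lam mu hint
    by_cases hn : n = 0
    · subst hn
      apply subset_convexHull
      refine ⟨Equiv.refl ℕ, fun m hm => rfl, fun m => ?_⟩
      simp only [Equiv.refl_apply]
      by_cases hm : m = 1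
      · subst hm
        rw [if_pos rfl, if_pos (by omega : 1 ≤ 1 ∧ 1 ≤ 0 + 1)]
        rw [show Finset.Icc 2 (0+1) = ∅ from Finset.Icc_eq_empty (by omega)]
        simp
      · rw [if_neg hm, if_neg (by omega), if_neg (by omega)]
    · have hn1 : 1 ≤ n := by omega
      set T := (∑ j ∈ Finset.Icc 1 (n+1), lam j) - ∑ j ∈ Finset.Icc 2 (n+1), mu j with hT
      have hint' : ∀ j, 2 ≤ j → j ≤ n → mu j ≤ lam (j-1) ∧ lam j ≤ mu j :=
        fun j h2 hj => hint j h2 (by omega)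
      have hp' := ih hn1 lam mu hint'
      set A := Function.update
        (fun m => if m = 1 then (∑ j ∈ Finset.Icc 1 n, lam j) - ∑ j ∈ Finset.Icc 2 n, mu j
          else if 2 ≤ m ∧ m ≤ n then mu m else 0) (n+1) (lam (n+1)) with hAdef
      have hA : A ∈ Pset (n+1) lam := Pset_extend n lam hp'
      set τ := Equiv.swap 1 (n+1) with hτdef
      have hτ : ∀ m, ¬(1 ≤ m ∧ m ≤ n+1) → τ m = m := fun m hm =>
        Equiv.swap_apply_of_ne_of_ne (by omega) (by omega)
      have hB : (fun m => A (τ m)) ∈ Pset (n+1) lam := Pset_comp_perm τ hτ hA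
      have hsum1 : ∑ j ∈ Finset.Icc 1 (n+1), lam j
          = (∑ j ∈ Finset.Icc 1 n, lam j) + lam (n+1) :=
        Finset.sum_Icc_succ_top (by omega) lam
      have hsum2 : ∑ j ∈ Finset.Icc 2 (n+1), mu j
          = (∑ j ∈ Finset.Icc 2 n, mu j) + mu (n+1) :=
        Finset.sum_Icc_succ_top (by omega) mu
      set u := T - lam (n+1) with hu_def
      set v := mu (n+1) - lam (n+1) with hv_def
      have hu : 0 ≤ u := by
        have hle : ∑ j ∈ Finset.Icc 2 (n+1), mu j
            ≤ ∑ j ∈ Finset.Icc 2 (n+1), lam (j-1) :=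
          Finset.sum_le_sum (fun j hj =>
            (hint j (Finset.mem_Icc.mp hj).1 (Finset.mem_Icc.mp hj).2).1)
        have hre : ∑ j ∈ Finset.Icc (1+1) (n+1), lam (j-1)
            = ∑ j ∈ Finset.Icc 1 n, lam j := sum_shift lam 1 n
        rw [hu_def, hT]
        rw [hsum1]
        have := hre ▸ hle
        linarith
      have hv : 0 ≤ v := by
        have := (hint (n+1) (by omega) (le_refl _)).2
        rw [hv_def]; linarith
      have hA1 : A 1 = T + v := by
        rw [hAdef, Function.update_of_ne (by omega), if_pos rfl, hT, hv_def, hsum1, hsum2]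
        ring
      have hAn : A (n+1) = lam (n+1) := by
        rw [hAdef, Function.update_self]
      have hAm : ∀ m, m ≠ 1 → m ≠ n+1 → A m = (if 2 ≤ m ∧ m ≤ n then mu m else 0) := by
        intro m h1 h2
        rw [hAdef, Function.update_of_ne h2, if_neg h1]
      have ht1 : τ 1 = n + 1 := Equiv.swap_apply_left 1 (n+1)
      have htn : τ (n+1) = 1 := Equiv.swap_apply_right 1 (n+1)
      by_cases hd : u + v = 0
      · have hu0 : u = 0 := by linarith
        have hv0 : v = 0 := by linarith
        have hpA : (fun m => if m = 1 then T else if 2 ≤ m ∧ m ≤ n+1 then mu m else 0)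
            = A := by
          funext m
          by_cases hm1 : m = 1
          · subst hm1; rw [if_pos rfl, hA1]; linarith
          · by_cases hmn : m = n+1
            · subst hmn
              rw [if_neg hm1, if_pos (by omega : 2 ≤ n+1 ∧ n+1 ≤ n+1), hAn]
              rw [hv_def] at hv0; linarith
            · rw [hAm m hm1 hmn, if_neg hm1]
              by_cases h2 : 2 ≤ m ∧ m ≤ n
              · rw [if_pos (by omega : 2 ≤ m ∧ m ≤ n+1), if_pos h2]
              · rw [if_neg (by omega), if_neg h2]
        rw [hpA]
        exact hA
      · have hdpos : 0 < u + v := lt_of_le_of_ne (by linarith) (Ne.symm hd)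
        set c := u / (u + v) with hc_def
        have hc0 : 0 ≤ c := div_nonneg hu (le_of_lt hdpos)
        have hc1 : c ≤ 1 := by rw [hc_def, div_le_one hdpos]; linarith
        have hcuv : c * (u + v) = u := div_mul_cancel₀ u hd
        have key : (fun m => if m = 1 then T else if 2 ≤ m ∧ m ≤ n+1 then mu m else 0)
            = c • A + (1 - c) • (fun m => A (τ m)) := by
          funext m
          simp only [Pi.add_apply, Pi.smul_apply, smul_eq_mul]
          by_cases hm1 : m = 1
          · subst hm1
            rw [if_pos rfl, ht1, hA1, hAn]
            have h2 : c * (T + v) = c * lam (n+1) + u := by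
              have : T + v = lam (n+1) + (u + v) := by rw [hu_def]; ring
              rw [this, mul_add, hcuv]
            linarith [h2]
          · by_cases hmn : m = n+1
            · subst hmn
              rw [if_neg hm1, if_pos (by omega : 2 ≤ n+1 ∧ n+1 ≤ n+1), htn, hA1, hAn]
              have h2 : (1 - c) * (T + v) = (1 - c) * lam (n+1) + (u + v) - u := by
                have h3 : T + v = lam (n+1) + (u + v) := by rw [hu_def]; ring
                rw [h3]
                ring_nf
                ring_nf at hcuv
                linarith [hcuv]
              have h4 : mu (n+1) = lam (n+1) + v := by rw [hv_def]; ring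
              linarith [h2, h4]
            · have hτm : τ m = m := Equiv.swap_apply_of_ne_of_ne hm1 hmn
              rw [hτm, hAm m hm1 hmn, if_neg hm1]
              by_cases h2 : 2 ≤ m ∧ m ≤ n
              · rw [if_pos (by omega : 2 ≤ m ∧ m ≤ n+1), if_pos h2]; ring
              · rw [if_neg (by omega), if_neg h2]; ring
        rw [key]
        exact Pset_convex (n+1) lam hA hB hc0 (by linarith) (by ring)

theorem image_subset_Pset : ∀ (n : ℕ), 1 ≤ n → ∀ (lam : ℕ → ℝ),
    ∀ x ∈ GTpoly n lam, wtMap n x ∈ Pset n lam := by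
  intro n
  induction n with
  | zero => omega
  | succ n ih =>
    intro _ lam x hx
    obtain ⟨hx0, hxnn, hxtop, hxint⟩ := hx
    by_cases hn : n = 0
    · subst hn
      have hwt : wtMap 1 x = fun m => if 1 ≤ m ∧ m ≤ 1 then lam m else 0 := by
        funext m
        simp only [wtMap]
        by_cases hm : 1 ≤ m ∧ m ≤ 1
        · have hm1 : m = 1 := by omega
          subst hm1
          rw [if_pos hm, if_pos hm,
            show Finset.Icc (1+1) 1 = ∅ from Finset.Icc_eq_empty (by omega),
            Finset.Icc_self]
          simp [hxtop 1 (le_refl _) (le_refl _)]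
        · rw [if_neg hm, if_neg hm]
      rw [hwt]
      exact subset_convexHull _ _ ⟨Equiv.refl ℕ, fun m _ => rfl, fun m => rfl⟩
    · have hn1 : 1 ≤ n := by omega
      set mu' : ℕ → ℝ := fun j => x 2 (j+1) with hmu'
      set y : ℕ → ℕ → ℝ :=
        fun i j => if 1 ≤ i ∧ i ≤ j ∧ j ≤ n then x (i+1) (j+1) else 0 with hy
      have hyGT : y ∈ GTpoly n mu' := by
        refine ⟨fun i j h => ?_, fun i j h1 h2 h3 => ?_, fun j h1 h2 => ?_,
          fun i j h2 hij hjn => ?_⟩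
        · simp only [hy]; rw [if_neg h]
        · simp only [hy]; rw [if_pos ⟨h1, h2, h3⟩]
          exact hxnn (i+1) (j+1) (by omega) (by omega) (by omega)
        · simp only [hy, hmu']; rw [if_pos ⟨le_refl 1, h1, h2⟩]
        · have H := hxint (i+1) (j+1) (by omega) (by omega) (by omega)
          rw [show (i+1)-1 = i by omega, show (j+1)-1 = j by omega] at H
          simp only [hy]
          rw [if_pos (⟨by omega, by omega, by omega⟩ : 1 ≤ i-1 ∧ i-1 ≤ j-1 ∧ j-1 ≤ n),
              if_pos (⟨by omega, by omega, by omega⟩ : 1 ≤ i ∧ i ≤ j ∧ j ≤ n),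
              if_pos (⟨by omega, by omega, by omega⟩ : 1 ≤ i-1 ∧ i-1 ≤ j ∧ j ≤ n),
              show i-1+1 = i by omega, show j-1+1 = j by omega]
          exact H
      have h1 := ih hn1 mu' y hyGT
      set t := (∑ j ∈ Finset.Icc 1 (n+1), lam j) - ∑ j ∈ Finset.Icc 2 (n+1), x 2 j
        with htdef
      set Sh : (ℕ → ℝ) → (ℕ → ℝ) :=
        fun z m => if m = 1 then t else if 2 ≤ m ∧ m ≤ n+1 then z (m-1) else 0 with hSh
      have hwt : wtMap (n+1) x = Sh (wtMap n y) := by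
        funext m
        simp only [wtMap, hSh]
        by_cases hm1 : m = 1
        · subst hm1
          rw [if_pos (by omega : 1 ≤ 1 ∧ 1 ≤ n+1), if_pos rfl, htdef]
          have hcong : ∑ j ∈ Finset.Icc 1 (n+1), x 1 j
              = ∑ j ∈ Finset.Icc 1 (n+1), lam j :=
            Finset.sum_congr rfl (fun j hj => by
              have := Finset.mem_Icc.mp hj
              exact hxtop j this.1 this.2)
          rw [hcong]
        · by_cases hm2 : 2 ≤ m ∧ m ≤ n+1
          · rw [if_pos (by omega : 1 ≤ m ∧ m ≤ n+1), if_neg hm1, if_pos hm2,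
              if_pos (by omega : 1 ≤ m-1 ∧ m-1 ≤ n)]
            have e1 : ∑ j ∈ Finset.Icc (m-1) n, y (m-1) j
                = ∑ j ∈ Finset.Icc m (n+1), x m j := by
              have s1 : ∑ j ∈ Finset.Icc (m-1) n, y (m-1) j
                  = ∑ j ∈ Finset.Icc (m-1) n, x m (j+1) :=
                Finset.sum_congr rfl (fun j hj => by
                  have hjm := Finset.mem_Icc.mp hj
                  simp only [hy]
                  rw [if_pos ⟨by omega, by omega, by omega⟩, show m-1+1 = m by omega])
              have s2 : ∑ j ∈ Finset.Icc ((m-1)+1) (n+1), (fun j => x m (j+1)) (j-1)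
                  = ∑ j ∈ Finset.Icc (m-1) n, x m (j+1) := sum_shift (fun j => x m (j+1)) (m-1) n
              rw [s1, ← s2, show (m-1)+1 = m by omega]
              exact Finset.sum_congr rfl (fun j hj => by
                have hjm := Finset.mem_Icc.mp hj
                simp only []
                rw [show j-1+1 = j by omega])
            have e2 : ∑ j ∈ Finset.Icc ((m-1)+1) n, y ((m-1)+1) j
                = ∑ j ∈ Finset.Icc (m+1) (n+1), x (m+1) j := by
              have s1 : ∑ j ∈ Finset.Icc ((m-1)+1) n, y ((m-1)+1) j
                  = ∑ j ∈ Finset.Icc m n, x (m+1) (j+1) := by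
                rw [show (m-1)+1 = m by omega]
                exact Finset.sum_congr rfl (fun j hj => by
                  have hjm := Finset.mem_Icc.mp hj
                  simp only [hy]
                  rw [if_pos ⟨by omega, by omega, by omega⟩])
              have s2 : ∑ j ∈ Finset.Icc (m+1) (n+1), (fun j => x (m+1) (j+1)) (j-1)
                  = ∑ j ∈ Finset.Icc m n, x (m+1) (j+1) := sum_shift (fun j => x (m+1) (j+1)) m n
              rw [s1, ← s2]
              exact Finset.sum_congr rfl (fun j hj => by
                have hjm := Finset.mem_Icc.mp hj
                simp only []
                rw [show j-1+1 = j by omega])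
            rw [e1, e2]
          · rw [if_neg (by omega), if_neg hm1, if_neg hm2]
      rw [hwt]
      have hG : ∀ (a b : ℝ) (y' z' : ℕ → ℝ), a + b = 1 →
          Sh (a • y' + b • z') = a • Sh y' + b • Sh z' := by
        intro a b y' z' hab
        funext m
        simp only [hSh, Pi.add_apply, Pi.smul_apply, smul_eq_mul]
        split_ifs with h1 h2
        · rw [← add_mul, hab, one_mul]
        · rfl
        · ring
      have hs : ∀ z ∈ permPts n mu', Sh z ∈ Pset (n+1) lam := by
        intro z hz
        obtain ⟨σ, hσf, hσv⟩ := hz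
        have hmem := perm_mem_iff hσf
        have hτex : ∃ τ : Equiv.Perm ℕ,
            ∀ m, τ m = if 2 ≤ m ∧ m ≤ n+1 then σ (m-1) + 1 else m := by
          refine ⟨⟨fun m => if 2 ≤ m ∧ m ≤ n+1 then σ (m-1) + 1 else m,
                  fun m => if 2 ≤ m ∧ m ≤ n+1 then σ.symm (m-1) + 1 else m, ?_, ?_⟩,
                  fun m => rfl⟩
          · intro m
            dsimp only
            by_cases hm : 2 ≤ m ∧ m ≤ n+1
            · have hσm : 1 ≤ σ (m-1) ∧ σ (m-1) ≤ n := (hmem (m-1)).mpr ⟨by omega, by omega⟩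
              rw [if_pos hm, if_pos (by omega : 2 ≤ σ (m-1) + 1 ∧ σ (m-1) + 1 ≤ n+1),
                show σ (m-1) + 1 - 1 = σ (m-1) by omega, Equiv.symm_apply_apply]
              omega
            · rw [if_neg hm, if_neg hm]
          · intro m
            dsimp only
            by_cases hm : 2 ≤ m ∧ m ≤ n+1
            · have hσm : 1 ≤ σ.symm (m-1) ∧ σ.symm (m-1) ≤ n := by
                have h5 : σ (σ.symm (m-1)) = m-1 := Equiv.apply_symm_apply σ (m-1)
                exact (hmem (σ.symm (m-1))).mp (by rw [h5]; exact ⟨by omega, by omega⟩)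
              rw [if_pos hm, if_pos (by omega : 2 ≤ σ.symm (m-1) + 1 ∧ σ.symm (m-1) + 1 ≤ n+1),
                show σ.symm (m-1) + 1 - 1 = σ.symm (m-1) by omega, Equiv.apply_symm_apply]
              omega
            · rw [if_neg hm, if_neg hm]
        obtain ⟨τ, hτv⟩ := hτex
        have hτfix : ∀ m, ¬(1 ≤ m ∧ m ≤ n+1) → τ m = m := fun m hm => by
          rw [hτv m, if_neg (by omega)]
        have hint : ∀ j, 2 ≤ j → j ≤ n+1 → x 2 j ≤ lam (j-1) ∧ lam j ≤ x 2 j := by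
          intro j h2 hj
          have H := hxint 2 j (le_refl 2) h2 hj
          rw [show (2:ℕ)-1 = 1 by norm_num] at H
          rw [hxtop (j-1) (by omega) (by omega), hxtop j (by omega) hj] at H
          exact ⟨H.1, H.2⟩
        have hq := Lmain (n+1) (by omega) lam (fun j => x 2 j) hint
        have hcomp := Pset_comp_perm τ hτfix hq
        have heq : Sh z = fun m =>
            (fun m' => if m' = 1
                then (∑ j ∈ Finset.Icc 1 (n+1), lam j) - ∑ j ∈ Finset.Icc 2 (n+1), x 2 j
                else if 2 ≤ m' ∧ m' ≤ n+1 then x 2 m' else 0) (τ m) := by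
          funext m
          simp only [hSh]
          by_cases hm1 : m = 1
          · subst hm1
            have hτ1 : τ 1 = 1 := by rw [hτv 1, if_neg (by omega)]
            rw [hτ1, if_pos rfl, if_pos rfl, htdef]
          · by_cases hm2 : 2 ≤ m ∧ m ≤ n+1
            · have hmm : 1 ≤ m-1 ∧ m-1 ≤ n := by omega
              have hσm : 1 ≤ σ (m-1) ∧ σ (m-1) ≤ n := (hmem (m-1)).mpr hmm
              have hτm : τ m = σ (m-1) + 1 := by rw [hτv m, if_pos hm2]
              rw [hτm, if_neg hm1, if_pos hm2, hσv (m-1), if_pos hmm,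
                if_neg (by omega : ¬(σ (m-1) + 1 = 1)),
                if_pos (by omega : 2 ≤ σ (m-1) + 1 ∧ σ (m-1) + 1 ≤ n+1)]
            · have hτm : τ m = m := by rw [hτv m, if_neg hm2]
              rw [hτm, if_neg hm1, if_neg hm2, if_neg hm1, if_neg hm2]
        rw [heq]
        exact hcomp
      exact mem_Pset_affine Sh hG hs (wtMap n y) h1

lemma image_convex (n : ℕ) (lam : ℕ → ℝ) : Convex ℝ (wtMap n '' GTpoly n lam) := by
  rintro w1 ⟨x, hx, rfl⟩ w2 ⟨z, hz, rfl⟩ a b ha hb hab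
  refine ⟨a • x + b • z, ⟨?_, ?_, ?_, ?_⟩, ?_⟩
  · intro i j h
    simp only [Pi.add_apply, Pi.smul_apply, smul_eq_mul]
    rw [hx.1 i j h, hz.1 i j h]; ring
  · intro i j h1 h2 h3
    simp only [Pi.add_apply, Pi.smul_apply, smul_eq_mul]
    exact add_nonneg (mul_nonneg ha (hx.2.1 i j h1 h2 h3))
      (mul_nonneg hb (hz.2.1 i j h1 h2 h3))
  · intro j h1 h2
    simp only [Pi.add_apply, Pi.smul_apply, smul_eq_mul]
    rw [hx.2.2.1 j h1 h2, hz.2.2.1 j h1 h2, ← add_mul, hab, one_mul]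
  · intro i j h2 hij hjn
    have H1 := hx.2.2.2 i j h2 hij hjn
    have H2 := hz.2.2.2 i j h2 hij hjn
    simp only [Pi.add_apply, Pi.smul_apply, smul_eq_mul]
    exact ⟨add_le_add (mul_le_mul_of_nonneg_left H1.1 ha)
        (mul_le_mul_of_nonneg_left H2.1 hb),
      add_le_add (mul_le_mul_of_nonneg_left H1.2 ha)
        (mul_le_mul_of_nonneg_left H2.2 hb)⟩
  · funext m
    simp only [wtMap, Pi.add_apply, Pi.smul_apply, smul_eq_mul]
    split_ifs with h
    · rw [Finset.sum_add_distrib, Finset.sum_add_distrib,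
        ← Finset.mul_sum, ← Finset.mul_sum, ← Finset.mul_sum, ← Finset.mul_sum]
      ring
    · ring

theorem perm_in_image : ∀ (n : ℕ), 1 ≤ n → ∀ (lam : ℕ → ℝ),
    (∀ k, 1 ≤ k → k < n → lam (k+1) ≤ lam k) →
    (∀ k, 1 ≤ k → k ≤ n → 0 ≤ lam k) →
    ∀ y ∈ permPts n lam, ∃ x ∈ GTpoly n lam, wtMap n x = y := by
  intro n
  induction n with
  | zero => omega
  | succ n ih =>
    intro _ lam hdec hnn y hy
    obtain ⟨σ, hσf, hσv⟩ := hy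
    have hmem := perm_mem_iff hσf
    by_cases hn : n = 0
    · subst hn
      have hσ1 : σ 1 = 1 := by
        have := (hmem 1).mpr ⟨le_refl _, by omega⟩; omega
      refine ⟨fun i j => if i = 1 ∧ j = 1 then lam 1 else 0, ⟨?_, ?_, ?_, ?_⟩, ?_⟩
      · intro i j h
        dsimp only
        rw [if_neg (by omega)]
      · intro i j h1 h2 h3
        dsimp only
        rw [if_pos (by omega)]
        exact hnn 1 (le_refl _) (by omega)
      · intro j h1 h2
        have hj : j = 1 := by omega
        subst hj
        dsimp only
        rw [if_pos ⟨rfl, rfl⟩]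
      · intro i j h2 hij hjn; omega
      · funext m
        simp only [wtMap]
        by_cases hm : 1 ≤ m ∧ m ≤ 0+1
        · have hm1 : m = 1 := by omega
          subst hm1
          rw [if_pos hm, hσv 1, if_pos hm, hσ1,
            show Finset.Icc (1+1) (0+1) = ∅ from Finset.Icc_eq_empty (by omega),
            Finset.Icc_self]
          simp
        · rw [if_neg hm, hσv m, if_neg hm]
    · have hn1 : 1 ≤ n := by omega
      have hs : 1 ≤ σ 1 ∧ σ 1 ≤ n+1 := (hmem 1).mpr ⟨le_refl _, by omega⟩
      set s := σ 1 with hsdef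
      set mu' : ℕ → ℝ := fun j => if j < s then lam j else lam (j+1) with hmu'
      have hdec' : ∀ k, 1 ≤ k → k < n → mu' (k+1) ≤ mu' k := by
        intro k h1 h2
        simp only [hmu']
        split_ifs with ha hb hb
        · exact hdec k h1 (by omega)
        · omega
        · exact le_trans (hdec (k+1) (by omega) (by omega)) (hdec k h1 (by omega))
        · exact hdec (k+1) (by omega) (by omega)
      have hnn' : ∀ k, 1 ≤ k → k ≤ n → 0 ≤ mu' k := by
        intro k h1 h2; simp only [hmu']; split_ifs
        · exact hnn k h1 (by omega)
        · exact hnn (k+1) (by omega) (by omega)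
      have hsummu : ∑ j ∈ Finset.Icc 1 n, mu' j
          = (∑ j ∈ Finset.Icc 1 (n+1), lam j) - lam s := by
        have hbij : ∑ j ∈ Finset.Icc 1 n, mu' j
            = ∑ k ∈ (Finset.Icc 1 (n+1)).erase s, lam k := by
          refine Finset.sum_bij' (fun j _ => if j < s then j else j + 1)
            (fun k _ => if k < s then k else k - 1) ?_ ?_ ?_ ?_ ?_
          all_goals intro a ha
          all_goals try have hb := Finset.mem_erase.mp ha
          all_goals try have hc := Finset.mem_Icc.mp ha
          all_goals try have hd := Finset.mem_Icc.mp hb.2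
          all_goals try simp only [Finset.mem_Icc, Finset.mem_erase, hmu']
          all_goals split_ifs <;> first | rfl | omega
        have hadd := Finset.add_sum_erase (Finset.Icc 1 (n+1)) lam
          (Finset.mem_Icc.mpr ⟨hs.1, hs.2⟩)
        rw [hbij]; linarith
      have hτex : ∃ τ : Equiv.Perm ℕ, ∀ m, τ m =
          if 1 ≤ m ∧ m ≤ n then (if σ (m+1) < s then σ (m+1) else σ (m+1) - 1) else m := by
        refine ⟨⟨fun m => if 1 ≤ m ∧ m ≤ n then (if σ (m+1) < s then σ (m+1) else σ (m+1) - 1) else m,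
                fun m => if 1 ≤ m ∧ m ≤ n then σ.symm (if m < s then m else m + 1) - 1 else m,
                ?_, ?_⟩, fun m => rfl⟩
        · intro m
          dsimp only
          by_cases hm : 1 ≤ m ∧ m ≤ n
          · have hk : 1 ≤ σ (m+1) ∧ σ (m+1) ≤ n+1 := (hmem (m+1)).mpr ⟨by omega, by omega⟩
            have hks : σ (m+1) ≠ s := by
              intro h
              have := σ.injective (h.trans hsdef)
              omega
            rw [if_pos hm]
            by_cases hlt : σ (m+1) < s
            · rw [if_pos hlt, if_pos (by omega : 1 ≤ σ (m+1) ∧ σ (m+1) ≤ n),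
                if_pos hlt, Equiv.symm_apply_apply]
              omega
            · rw [if_neg hlt, if_pos (by omega : 1 ≤ σ (m+1) - 1 ∧ σ (m+1) - 1 ≤ n),
                if_neg (by omega : ¬(σ (m+1) - 1 < s)),
                show σ (m+1) - 1 + 1 = σ (m+1) by omega, Equiv.symm_apply_apply]
              omega
          · rw [if_neg hm, if_neg hm]
        · intro m
          dsimp only
          by_cases hm : 1 ≤ m ∧ m ≤ n
          · rw [if_pos hm]
            have hu1 : 1 ≤ (if m < s then m else m + 1)
                ∧ (if m < s then m else m + 1) ≤ n+1
                ∧ (if m < s then m else m + 1) ≠ s := by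
              split_ifs with h <;> omega
            have hru : σ (σ.symm (if m < s then m else m + 1))
                = (if m < s then m else m + 1) := Equiv.apply_symm_apply _ _
            have hrmem : 1 ≤ σ.symm (if m < s then m else m + 1)
                ∧ σ.symm (if m < s then m else m + 1) ≤ n+1 :=
              (hmem _).mp (by rw [hru]; exact ⟨hu1.1, hu1.2.1⟩)
            have hrne : σ.symm (if m < s then m else m + 1) ≠ 1 := by
              intro h
              apply hu1.2.2
              rw [← hru, h, ← hsdef]
            rw [if_pos (by omega : 1 ≤ σ.symm (if m < s then m else m + 1) - 1
                ∧ σ.symm (if m < s then m else m + 1) - 1 ≤ n),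
              show σ.symm (if m < s then m else m + 1) - 1 + 1
                = σ.symm (if m < s then m else m + 1) by omega, hru]
            by_cases h : m < s
            · rw [if_pos h, if_pos h]
            · rw [if_neg h, if_neg (by omega)]
              omega
          · rw [if_neg hm, if_neg hm]
      obtain ⟨τ, hτv⟩ := hτex
      have hτfix : ∀ m, ¬(1 ≤ m ∧ m ≤ n) → τ m = m := fun m hm => by
        rw [hτv m, if_neg hm]
      have hy'mem : (fun m => if 1 ≤ m ∧ m ≤ n then mu' (τ m) else 0) ∈ permPts n mu' :=
        ⟨τ, hτfix, fun m => rfl⟩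
      obtain ⟨x', hx', hwx'⟩ := ih hn1 mu' hdec' hnn'
        (fun m => if 1 ≤ m ∧ m ≤ n then mu' (τ m) else 0) hy'mem
      obtain ⟨hx'0, hx'nn, hx'top, hx'int⟩ := hx'
      have hy'val : ∀ m, 1 ≤ m → m ≤ n → mu' (τ m) = y (m+1) := by
        intro m h1 h2
        rw [hτv m, if_pos ⟨h1, h2⟩, hσv (m+1),
          if_pos (⟨by omega, by omega⟩ : 1 ≤ m+1 ∧ m+1 ≤ n+1)]
        have hk : 1 ≤ σ (m+1) ∧ σ (m+1) ≤ n+1 := (hmem (m+1)).mpr ⟨by omega, by omega⟩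
        have hks : σ (m+1) ≠ s := by
          intro h
          have := σ.injective (h.trans hsdef)
          omega
        by_cases hlt : σ (m+1) < s
        · rw [if_pos hlt]; simp only [hmu']; rw [if_pos hlt]
        · rw [if_neg hlt]; simp only [hmu']
          rw [if_neg (by omega : ¬(σ (m+1) - 1 < s)),
            show σ (m+1) - 1 + 1 = σ (m+1) by omega]
      set xx : ℕ → ℕ → ℝ := fun i j => if i = 1 then (if 1 ≤ j ∧ j ≤ n+1 then lam j else 0)
        else x' (i-1) (j-1) with hxxdef
      have hxx1 : ∀ j, 1 ≤ j → j ≤ n+1 → xx 1 j = lam j := by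
        intro j h1 h2; simp only [hxxdef, if_true]; rw [if_pos ⟨h1, h2⟩]
      have hxx1' : ∀ j, ¬(1 ≤ j ∧ j ≤ n+1) → xx 1 j = 0 := by
        intro j h; simp only [hxxdef, if_true]; rw [if_neg h]
      have hxxi : ∀ i j, i ≠ 1 → xx i j = x' (i-1) (j-1) := by
        intro i j hi; simp only [hxxdef]; rw [if_neg hi]
      refine ⟨xx, ⟨?_, ?_, ?_, ?_⟩, ?_⟩
      · intro i j h
        by_cases hi : i = 1
        · subst hi
          exact hxx1' j (by omega)
        · rw [hxxi i j hi]
          apply hx'0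
          omega
      · intro i j h1 h2 h3
        by_cases hi : i = 1
        · subst hi
          rw [hxx1 j (by omega) h3]
          exact hnn j (by omega) h3
        · rw [hxxi i j hi]
          exact hx'nn (i-1) (j-1) (by omega) (by omega) (by omega)
      · intro j h1 h2
        exact hxx1 j h1 h2
      · intro i j h2 hij hjn
        by_cases hi : i = 2
        · subst hi
          rw [show (2:ℕ)-1 = 1 by norm_num, hxx1 (j-1) (by omega) (by omega),
            hxx1 j (by omega) hjn, hxxi 2 j (by omega),
            show (2:ℕ)-1 = 1 by norm_num, hx'top (j-1) (by omega) (by omega)]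
          have hdj : lam j ≤ lam (j-1) := by
            have := hdec (j-1) (by omega) (by omega)
            rw [show j-1+1 = j by omega] at this
            exact this
          simp only [hmu']
          by_cases hlt : j - 1 < s
          · rw [if_pos hlt]
            exact ⟨le_refl _, hdj⟩
          · rw [if_neg hlt, show j-1+1 = j by omega]
            exact ⟨hdj, le_refl _⟩
        · rw [hxxi i j (by omega), hxxi (i-1) (j-1) (by omega), hxxi (i-1) j (by omega)]
          exact hx'int (i-1) (j-1) (by omega) (by omega) (by omega)
      · funext m
        simp only [wtMap]
        by_cases hm : 1 ≤ m ∧ m ≤ n+1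
        · rw [if_pos hm]
          by_cases hm1 : m = 1
          · subst hm1
            have c1 : ∑ j ∈ Finset.Icc 1 (n+1), xx 1 j = ∑ j ∈ Finset.Icc 1 (n+1), lam j :=
              Finset.sum_congr rfl (fun j hj => by
                have := Finset.mem_Icc.mp hj
                exact hxx1 j this.1 this.2)
            have c2 : ∑ j ∈ Finset.Icc (1+1) (n+1), xx (1+1) j = ∑ j ∈ Finset.Icc 1 n, mu' j := by
              have c2a : ∑ j ∈ Finset.Icc (1+1) (n+1), xx (1+1) j
                  = ∑ j ∈ Finset.Icc (1+1) (n+1), mu' (j-1) :=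
                Finset.sum_congr rfl (fun j hj => by
                  have hjm := Finset.mem_Icc.mp hj
                  rw [hxxi (1+1) j (by omega), show (1+1:ℕ)-1 = 1 by norm_num,
                    hx'top (j-1) (by omega) (by omega)])
              rw [c2a]
              exact sum_shift mu' 1 n
            rw [c1, c2, hsummu, hσv 1, if_pos (by omega : 1 ≤ 1 ∧ 1 ≤ n+1), ← hsdef]
            ring
          · have c1 : ∑ j ∈ Finset.Icc m (n+1), xx m j
                = ∑ j ∈ Finset.Icc (m-1) n, x' (m-1) j := by
              have c1a : ∑ j ∈ Finset.Icc m (n+1), xx m j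
                  = ∑ j ∈ Finset.Icc m (n+1), x' (m-1) (j-1) :=
                Finset.sum_congr rfl (fun j hj => hxxi m j hm1)
              have c1b := sum_shift (x' (m-1)) (m-1) n
              rw [show m-1+1 = m by omega] at c1b
              rw [c1a, c1b]
            have c2 : ∑ j ∈ Finset.Icc (m+1) (n+1), xx (m+1) j
                = ∑ j ∈ Finset.Icc m n, x' m j := by
              have c2a : ∑ j ∈ Finset.Icc (m+1) (n+1), xx (m+1) j
                  = ∑ j ∈ Finset.Icc (m+1) (n+1), x' m (j-1) :=
                Finset.sum_congr rfl (fun j hj => by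
                  rw [hxxi (m+1) j (by omega), show m+1-1 = m by omega])
              rw [c2a]
              exact sum_shift (x' m) m n
            rw [c1, c2]
            have hw := congrFun hwx' (m-1)
            simp only [wtMap] at hw
            rw [if_pos (⟨by omega, by omega⟩ : 1 ≤ m-1 ∧ m-1 ≤ n),
              show m-1+1 = m by omega] at hw
            have hyv := hy'val (m-1) (by omega) (by omega)
            rw [show m-1+1 = m by omega] at hyv
            rw [hw, hyv, if_pos (⟨by omega, by omega⟩ : 1 ≤ m-1 ∧ m-1 ≤ n)]
        · rw [if_neg hm, hσv m, if_neg hm]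

end StmtAux

/-- The image of `GT(λ)` under the weight map is the permutahedron `P_λ = Conv(Sₙ·λ)`. -/
theorem stmt16 (n : ℕ) (hn : 1 ≤ n) (lam : ℕ → ℤ)
    (hnn : ∀ k, 0 ≤ lam k) (hdec : ∀ k, 1 ≤ k → k < n → lam (k+1) ≤ lam k) :
    wtMap n '' GTpoly n (fun j => (lam j : ℝ)) =
      convexHull ℝ {y : ℕ → ℝ | ∃ σ : Equiv.Perm ℕ,
        (∀ m, ¬(1 ≤ m ∧ m ≤ n) → σ m = m) ∧
        (∀ m, y m = if 1 ≤ m ∧ m ≤ n then (lam (σ m) : ℝ) else 0)} := by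
  have hdecR : ∀ k, 1 ≤ k → k < n →
      (fun j => (lam j : ℝ)) (k+1) ≤ (fun j => (lam j : ℝ)) k :=
    fun k h1 h2 => Int.cast_le.mpr (hdec k h1 h2)
  have hnnR : ∀ k, 1 ≤ k → k ≤ n → 0 ≤ (fun j => (lam j : ℝ)) k :=
    fun k _ _ => by show (0:ℝ) ≤ ((lam k : ℤ) : ℝ); exact_mod_cast hnn k
  apply Set.Subset.antisymm
  · rintro _ ⟨x, hx, rfl⟩
    exact StmtAux.image_subset_Pset n hn _ x hx
  · apply convexHull_min
    · intro y hy
      obtain ⟨x, hx, hwx⟩ := StmtAux.perm_in_image n hn _ hdecR hnnR y hy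
      exact ⟨x, hx, hwx⟩
    · exact StmtAux.image_convex n _
end
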